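/- arXiv:2512.18430 — 8 statements merged into one kernel-verified Lean document; each statement's English description precedes it below -/
import Mathlib

section
/- For all real numbers a > 0 and α > 0 with a·α > 1, and for all τ ≥ 0, one has ∫₀^τ e^{s−τ} (a s + 1)^{−α} ds ≤ r_{a,α} (a τ + 1)^{−α}, where r_{a,α} = (aα)^α · ∫₀^{(aα−1)/a} e^{s − (aα−1)/a} (a s + 1)^{−α} ds + (aα + 1) + ((aα+1)/(aα))^α · (1 − e^{−1/a}). -/
open Real MeasureTheory intervalIntegral

lemma aux_rpow_exp (α B d e : ℝ) (hα : 0 < α) (hB : 0 < B) (hBd : 0 ≤ B + d)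
    (h : d * α ≤ B * e) : (B + d) ^ α ≤ B ^ α * Real.exp e := by
  have hx : d ≤ B * (e / α) := by rw [← mul_div_assoc, le_div_iff₀ hα]; exact h
  have h1 : B + d ≤ B * Real.exp (e / α) := by
    nlinarith [mul_le_mul_of_nonneg_left (Real.add_one_le_exp (e / α)) hB.le]
  calc (B + d) ^ α ≤ (B * Real.exp (e / α)) ^ α := Real.rpow_le_rpow hBd h1 hα.le
    _ = B ^ α * (Real.exp (e / α)) ^ α := Real.mul_rpow hB.le (Real.exp_pos _).le
    _ = B ^ α * Real.exp e := by rw [← Real.exp_mul, div_mul_cancel₀ _ hα.ne']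

lemma aux_expint (τ : ℝ) : ∀ u v : ℝ,
    (∫ s in u..v, Real.exp (s - τ)) = Real.exp (v - τ) - Real.exp (u - τ) := by
  intro u v
  have hd : ∀ s ∈ Set.uIcc u v, HasDerivAt (fun x => Real.exp (x - τ)) (Real.exp (s - τ)) s := by
    intro s _
    simpa [Function.comp_def] using (Real.hasDerivAt_exp (s - τ)).comp s ((hasDerivAt_id s).sub_const τ)
  rw [intervalIntegral.integral_eq_sub_of_hasDerivAt hd
    ((Real.continuous_exp.comp (continuous_id.sub continuous_const)).intervalIntegrable u v)]

set_option maxHeartbeats 1000000 in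
theorem stmt_0 (a α : ℝ) (ha : 0 < a) (hα : 0 < α) (haα : 1 < a * α)
    (τ : ℝ) (hτ : 0 ≤ τ) :
    ∫ s in (0:ℝ)..τ, Real.exp (s - τ) * (a * s + 1) ^ (-α) ≤
      ((a * α) ^ α *
          (∫ s in (0:ℝ)..((a * α - 1) / a),
            Real.exp (s - (a * α - 1) / a) * (a * s + 1) ^ (-α))
        + (a * α + 1)
        + ((a * α + 1) / (a * α)) ^ α * (1 - Real.exp (-(1 / a))))
        * (a * τ + 1) ^ (-α) := by
  have haα0 : 0 < a * α := by linarith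
  set T : ℝ := (a * α - 1) / a with hTdef
  have hT0 : 0 < T := div_pos (by linarith) ha
  have hTa : a * T + 1 = a * α := by rw [hTdef]; field_simp; ring
  have hTα : T < α := by rw [hTdef, div_lt_iff₀ ha]; nlinarith
  have hTα' : α - T = 1 / a := by
    rw [eq_div_iff ha.ne']
    linear_combination -hTa
  have haτ : 0 < a * τ + 1 := by nlinarith
  have hpos : ∀ s : ℝ, 0 ≤ s → 0 < a * s + 1 := fun s hs => by nlinarith
  have hfint : ∀ c u v : ℝ, 0 ≤ u → 0 ≤ v →
      IntervalIntegrable (fun s => Real.exp (s - c) * (a * s + 1) ^ (-α)) volume u v := by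
    intro c u v hu hv
    apply ContinuousOn.intervalIntegrable
    apply ContinuousOn.mul
      ((Real.continuous_exp.comp (continuous_id.sub continuous_const)).continuousOn)
    apply ContinuousOn.rpow_const
      (((continuous_const.mul continuous_id).add continuous_const).continuousOn)
    intro x hx
    have hx0 : 0 ≤ x := by
      rcases Set.mem_uIcc.mp hx with ⟨h1, _⟩ | ⟨h1, _⟩ <;> linarith
    exact Or.inl (ne_of_gt (hpos x hx0))
  have hfnn : ∀ c s : ℝ, 0 ≤ s → 0 ≤ Real.exp (s - c) * (a * s + 1) ^ (-α) :=
    fun c s hs => mul_nonneg (Real.exp_pos _).le (Real.rpow_nonneg (hpos s hs).le _)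
  set cI : ℝ := ∫ s in (0:ℝ)..T, Real.exp (s - T) * (a * s + 1) ^ (-α) with hcI
  have hcI0 : 0 ≤ cI :=
    intervalIntegral.integral_nonneg hT0.le (fun u hu => hfnn T u hu.1)
  have key1 : Real.exp (T - τ) * (a * τ + 1) ^ α ≤ (a * α) ^ α := by
    have h := aux_rpow_exp α (a * α) (a * τ + 1 - a * α) (τ - T) hα haα0 (by linarith)
      (le_of_eq (by rw [hTdef]; field_simp; ring))
    have h2 : a * α + (a * τ + 1 - a * α) = a * τ + 1 := by ring
    rw [h2] at h
    have h3 : Real.exp (T - τ) * Real.exp (τ - T) = 1 := by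
      rw [← Real.exp_add]; norm_num
    calc Real.exp (T - τ) * (a * τ + 1) ^ α
        ≤ Real.exp (T - τ) * ((a * α) ^ α * Real.exp (τ - T)) :=
          mul_le_mul_of_nonneg_left h (Real.exp_pos _).le
      _ = (a * α) ^ α * (Real.exp (T - τ) * Real.exp (τ - T)) := by ring
      _ = (a * α) ^ α := by rw [h3, mul_one]
  have hRinv : (a * τ + 1) ^ (-α) * (a * τ + 1) ^ α = 1 := by
    rw [← Real.rpow_add haτ]; norm_num
  have hRnn : 0 ≤ (a * τ + 1) ^ (-α) := Real.rpow_nonneg haτ.le _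
  have hRpow : 0 < (a * τ + 1) ^ α := Real.rpow_pos_of_pos haτ _
  have he1 : Real.exp (-(1 / a)) ≤ 1 := by
    rw [Real.exp_le_one_iff]
    simp only [neg_nonpos]
    positivity
  have ht3 : 0 ≤ ((a * α + 1) / (a * α)) ^ α * (1 - Real.exp (-(1 / a))) :=
    mul_nonneg (Real.rpow_nonneg (by positivity) _) (by linarith)
  have hsplit : ∀ u v : ℝ,
      (∫ s in u..v, Real.exp (s - τ) * (a * s + 1) ^ (-α))
        = Real.exp (T - τ) * ∫ s in u..v, Real.exp (s - T) * (a * s + 1) ^ (-α) := by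
    intro u v
    rw [← intervalIntegral.integral_const_mul]
    apply intervalIntegral.integral_congr
    intro s _
    simp only
    rw [← mul_assoc, ← Real.exp_add]
    ring_nf
  suffices hIR : (∫ s in (0:ℝ)..τ, Real.exp (s - τ) * (a * s + 1) ^ (-α)) * (a * τ + 1) ^ α ≤
      (a * α) ^ α * cI + (a * α + 1) +
        ((a * α + 1) / (a * α)) ^ α * (1 - Real.exp (-(1 / a))) by
    have hfin := mul_le_mul_of_nonneg_right hIR hRnn
    calc (∫ s in (0:ℝ)..τ, Real.exp (s - τ) * (a * s + 1) ^ (-α))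
        = ((∫ s in (0:ℝ)..τ, Real.exp (s - τ) * (a * s + 1) ^ (-α)) * (a * τ + 1) ^ α)
            * (a * τ + 1) ^ (-α) := by
          rw [mul_assoc, mul_comm ((a * τ + 1) ^ α) _, hRinv, mul_one]
      _ ≤ _ := hfin
  rcases le_or_gt τ T with hcase | hcase
  · -- τ ≤ T
    have hmono : (∫ s in (0:ℝ)..τ, Real.exp (s - T) * (a * s + 1) ^ (-α)) ≤ cI := by
      rw [hcI]
      apply intervalIntegral.integral_mono_interval le_rfl hτ hcase ?_ (hfint T 0 T le_rfl hT0.le)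
      filter_upwards [ae_restrict_mem measurableSet_Ioc] with s hs
      exact hfnn T s hs.1.le
    rw [hsplit 0 τ]
    calc Real.exp (T - τ) * (∫ s in (0:ℝ)..τ, Real.exp (s - T) * (a * s + 1) ^ (-α))
          * (a * τ + 1) ^ α
        = (∫ s in (0:ℝ)..τ, Real.exp (s - T) * (a * s + 1) ^ (-α))
            * (Real.exp (T - τ) * (a * τ + 1) ^ α) := by ring
      _ ≤ cI * (a * α) ^ α := by
          apply mul_le_mul hmono key1 (by positivity) hcI0
      _ ≤ _ := by nlinarith [ht3]
  · -- T < τ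
    set m : ℝ := min τ α with hm
    have hTm : T ≤ m := le_min hcase.le hTα.le
    have hmτ : m ≤ τ := min_le_left _ _
    have hm0 : 0 ≤ m := le_trans hT0.le hTm
    have hadd : (∫ s in (0:ℝ)..T, Real.exp (s - τ) * (a * s + 1) ^ (-α))
        + (∫ s in T..m, Real.exp (s - τ) * (a * s + 1) ^ (-α))
        + (∫ s in m..τ, Real.exp (s - τ) * (a * s + 1) ^ (-α))
        = ∫ s in (0:ℝ)..τ, Real.exp (s - τ) * (a * s + 1) ^ (-α) := by
      rw [intervalIntegral.integral_add_adjacent_intervals (hfint τ 0 T le_rfl hT0.le)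
            (hfint τ T m hT0.le hm0),
          intervalIntegral.integral_add_adjacent_intervals (hfint τ 0 m le_rfl hm0)
            (hfint τ m τ hm0 hτ)]
    have hA : (∫ s in (0:ℝ)..T, Real.exp (s - τ) * (a * s + 1) ^ (-α)) * (a * τ + 1) ^ α
        ≤ (a * α) ^ α * cI := by
      rw [hsplit 0 T, ← hcI]
      calc Real.exp (T - τ) * cI * (a * τ + 1) ^ α
          = cI * (Real.exp (T - τ) * (a * τ + 1) ^ α) := by ring
        _ ≤ cI * (a * α) ^ α := mul_le_mul_of_nonneg_left key1 hcI0
        _ = (a * α) ^ α * cI := mul_comm _ _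
    have hBint : (∫ s in T..m, Real.exp (s - τ) * (a * s + 1) ^ (-α))
        ≤ (Real.exp (m - τ) - Real.exp (T - τ)) * (a * α) ^ (-α) := by
      have hBpt : ∀ s ∈ Set.Icc T m, Real.exp (s - τ) * (a * s + 1) ^ (-α)
          ≤ Real.exp (s - τ) * (a * α) ^ (-α) := by
        intro s hs
        apply mul_le_mul_of_nonneg_left _ (Real.exp_pos _).le
        have h := Real.rpow_le_rpow_of_nonpos (x := a * T + 1) (y := a * s + 1)
          (by rw [hTa]; linarith) (by nlinarith [hs.1]) (neg_nonpos.mpr hα.le)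
        rwa [hTa] at h
      calc (∫ s in T..m, Real.exp (s - τ) * (a * s + 1) ^ (-α))
          ≤ ∫ s in T..m, Real.exp (s - τ) * (a * α) ^ (-α) :=
            intervalIntegral.integral_mono_on hTm (hfint τ T m hT0.le hm0)
              (((Real.continuous_exp.comp (continuous_id.sub continuous_const)).mul
                continuous_const).intervalIntegrable T m) hBpt
        _ = (Real.exp (m - τ) - Real.exp (T - τ)) * (a * α) ^ (-α) := by
            rw [intervalIntegral.integral_mul_const, aux_expint τ T m]
    have hC2 : (Real.exp (m - τ) - Real.exp (T - τ)) * (a * τ + 1) ^ α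
        ≤ (a * α + 1) ^ α * (1 - Real.exp (-(1 / a))) := by
      rcases le_total τ α with h' | h'
      · have hmm : m = τ := min_eq_left h'
        rw [hmm, sub_self, Real.exp_zero]
        have h1 : (a * τ + 1) ^ α ≤ (a * α + 1) ^ α :=
          Real.rpow_le_rpow haτ.le (by nlinarith) hα.le
        have h2 : Real.exp (-(1 / a)) ≤ Real.exp (T - τ) :=
          Real.exp_le_exp.mpr (by linarith)
        have h4 : Real.exp (T - τ) ≤ 1 := by
          rw [Real.exp_le_one_iff]; linarith
        calc (1 - Real.exp (T - τ)) * (a * τ + 1) ^ α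
            ≤ (1 - Real.exp (-(1 / a))) * (a * α + 1) ^ α :=
              mul_le_mul (by linarith) h1 (Real.rpow_nonneg haτ.le _) (by linarith)
          _ = (a * α + 1) ^ α * (1 - Real.exp (-(1 / a))) := mul_comm _ _
      · have hmm : m = α := min_eq_right h'
        rw [hmm]
        have key2 : Real.exp (α - τ) * (a * τ + 1) ^ α ≤ (a * α + 1) ^ α := by
          have h := aux_rpow_exp α (a * α + 1) (a * τ - a * α) (τ - α) hα (by linarith)
            (by nlinarith) (by nlinarith)
          have h2 : a * α + 1 + (a * τ - a * α) = a * τ + 1 := by ring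
          rw [h2] at h
          have h3 : Real.exp (α - τ) * Real.exp (τ - α) = 1 := by
            rw [← Real.exp_add]; norm_num
          calc Real.exp (α - τ) * (a * τ + 1) ^ α
              ≤ Real.exp (α - τ) * ((a * α + 1) ^ α * Real.exp (τ - α)) :=
                mul_le_mul_of_nonneg_left h (Real.exp_pos _).le
            _ = (a * α + 1) ^ α * (Real.exp (α - τ) * Real.exp (τ - α)) := by ring
            _ = (a * α + 1) ^ α := by rw [h3, mul_one]
        have hsplit2 : Real.exp (T - τ) = Real.exp (α - τ) * Real.exp (-(1 / a)) := by
          rw [← Real.exp_add]; congr 1; linarith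
        rw [hsplit2]
        calc (Real.exp (α - τ) - Real.exp (α - τ) * Real.exp (-(1 / a))) * (a * τ + 1) ^ α
            = (1 - Real.exp (-(1 / a))) * (Real.exp (α - τ) * (a * τ + 1) ^ α) := by ring
          _ ≤ (1 - Real.exp (-(1 / a))) * (a * α + 1) ^ α :=
              mul_le_mul_of_nonneg_left key2 (by linarith)
          _ = (a * α + 1) ^ α * (1 - Real.exp (-(1 / a))) := mul_comm _ _
    have hB : (∫ s in T..m, Real.exp (s - τ) * (a * s + 1) ^ (-α)) * (a * τ + 1) ^ α
        ≤ ((a * α + 1) / (a * α)) ^ α * (1 - Real.exp (-(1 / a))) := by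
      have hstep := mul_le_mul_of_nonneg_right hBint hRpow.le
      have hdiv : ((a * α + 1) / (a * α)) ^ α = (a * α + 1) ^ α * (a * α) ^ (-α) := by
        rw [Real.div_rpow (by linarith) haα0.le, Real.rpow_neg haα0.le, div_eq_mul_inv]
      calc (∫ s in T..m, Real.exp (s - τ) * (a * s + 1) ^ (-α)) * (a * τ + 1) ^ α
          ≤ (Real.exp (m - τ) - Real.exp (T - τ)) * (a * α) ^ (-α) * (a * τ + 1) ^ α := hstep
        _ = ((Real.exp (m - τ) - Real.exp (T - τ)) * (a * τ + 1) ^ α) * (a * α) ^ (-α) := by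
            ring
        _ ≤ ((a * α + 1) ^ α * (1 - Real.exp (-(1 / a)))) * (a * α) ^ (-α) :=
            mul_le_mul_of_nonneg_right hC2 (Real.rpow_nonneg haα0.le _)
        _ = ((a * α + 1) / (a * α)) ^ α * (1 - Real.exp (-(1 / a))) := by rw [hdiv]; ring
    have hC : (∫ s in m..τ, Real.exp (s - τ) * (a * s + 1) ^ (-α)) * (a * τ + 1) ^ α
        ≤ a * α + 1 := by
      rcases le_total τ α with h' | h'
      · have hmm : m = τ := min_eq_left h'
        rw [hmm, intervalIntegral.integral_same, zero_mul]
        linarith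
      · have hmm : m = α := min_eq_right h'
        rw [hmm]
        have hpow : ∀ s : ℝ, 0 ≤ s →
            (a * s + 1) ^ (-α) = (a * s + 1) ^ (-α - 1) * (a * s + 1) := by
          intro s hs
          rw [← Real.rpow_add_one (hpos s hs).ne' (-α - 1)]
          congr 1
          ring
        have hms : ∀ s ∈ Set.uIcc α τ, HasDerivAt
            (fun x => Real.exp (x - τ) * (a * x + 1) ^ (-α))
            (Real.exp (s - τ) * ((a * s + 1 - a * α) * (a * s + 1) ^ (-α - 1))) s := by
          intro s hs
          have hs0 : 0 ≤ s := by
            rw [Set.uIcc_of_le h'] at hs; linarith [hs.1]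
          have hb : 0 < a * s + 1 := hpos s hs0
          have h1 : HasDerivAt (fun x : ℝ => Real.exp (x - τ)) (Real.exp (s - τ)) s := by
            simpa [Function.comp_def] using (Real.hasDerivAt_exp (s - τ)).comp s ((hasDerivAt_id s).sub_const τ)
          have hlin : HasDerivAt (fun x : ℝ => a * x + 1) a s := by
            simpa using ((hasDerivAt_id s).const_mul a).add_const 1
          have h2 : HasDerivAt (fun x : ℝ => (a * x + 1) ^ (-α))
              ((-α) * (a * s + 1) ^ (-α - 1) * a) s := by
            simpa [Function.comp_def, mul_comm, mul_assoc] using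
              (Real.hasDerivAt_rpow_const (x := a * s + 1) (p := -α) (Or.inl hb.ne')).comp s hlin
          have h3 := h1.mul h2
          refine HasDerivAt.congr_deriv h3 ?_
          rw [hpow s hs0]
          ring
        have hGcont : ContinuousOn
            (fun s => Real.exp (s - τ) * ((a * s + 1 - a * α) * (a * s + 1) ^ (-α - 1)))
            (Set.uIcc α τ) := by
          apply ContinuousOn.mul
            ((Real.continuous_exp.comp (continuous_id.sub continuous_const)).continuousOn)
          apply ContinuousOn.mul
            (((continuous_const.mul continuous_id).add continuous_const).sub
              continuous_const).continuousOn
          apply ContinuousOn.rpow_const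
            (((continuous_const.mul continuous_id).add continuous_const).continuousOn)
          intro x hx
          have hx0 : 0 ≤ x := by rw [Set.uIcc_of_le h'] at hx; linarith [hx.1, hα.le]
          exact Or.inl (hpos x hx0).ne'
        have hGint : IntervalIntegrable
            (fun s => Real.exp (s - τ) * ((a * s + 1 - a * α) * (a * s + 1) ^ (-α - 1)))
            volume α τ := hGcont.intervalIntegrable
        have hFTC := intervalIntegral.integral_eq_sub_of_hasDerivAt hms hGint
        have hpt : ∀ s ∈ Set.Icc α τ, Real.exp (s - τ) * (a * s + 1) ^ (-α)
            ≤ (a * α + 1) * (Real.exp (s - τ) * ((a * s + 1 - a * α) * (a * s + 1) ^ (-α - 1))) := by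
          intro s hs
          have hs0 : 0 ≤ s := le_trans hα.le hs.1
          have hb : 0 < a * s + 1 := hpos s hs0
          rw [hpow s hs0]
          have hEX : 0 < Real.exp (s - τ) * (a * s + 1) ^ (-α - 1) :=
            mul_pos (Real.exp_pos _) (Real.rpow_pos_of_pos hb _)
          have h0 : 0 ≤ (Real.exp (s - τ) * (a * s + 1) ^ (-α - 1)) * (a * α * (a * (s - α))) :=
            mul_nonneg hEX.le (mul_nonneg (mul_nonneg ha.le hα.le)
              (mul_nonneg ha.le (sub_nonneg.mpr hs.1)))
          nlinarith [h0]
        have hmono2 : (∫ s in α..τ, Real.exp (s - τ) * (a * s + 1) ^ (-α))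
            ≤ ∫ s in α..τ, (a * α + 1) *
              (Real.exp (s - τ) * ((a * s + 1 - a * α) * (a * s + 1) ^ (-α - 1))) :=
          intervalIntegral.integral_mono_on h' (hfint τ α τ hα.le hτ) (hGint.const_mul _) hpt
        rw [intervalIntegral.integral_const_mul, hFTC] at hmono2
        have hfα : 0 ≤ Real.exp (α - τ) * (a * α + 1) ^ (-α) :=
          mul_nonneg (Real.exp_pos _).le (Real.rpow_nonneg (by linarith) _)
        have hstep := mul_le_mul_of_nonneg_right hmono2 hRpow.le
        rw [sub_self, Real.exp_zero, one_mul] at hstep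
        calc (∫ s in α..τ, Real.exp (s - τ) * (a * s + 1) ^ (-α)) * (a * τ + 1) ^ α
            ≤ (a * α + 1) * ((a * τ + 1) ^ (-α) - Real.exp (α - τ) * (a * α + 1) ^ (-α))
                * (a * τ + 1) ^ α := hstep
          _ ≤ (a * α + 1) * ((a * τ + 1) ^ (-α) * (a * τ + 1) ^ α) := by
              nlinarith [mul_nonneg (mul_nonneg (by linarith : (0:ℝ) ≤ a * α + 1) hfα) hRpow.le]
          _ = a * α + 1 := by rw [hRinv, mul_one]
    rw [← hadd]
    nlinarith [hA, hB, hC]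
end

section
/- Let η > 0 and D ≥ 0, and let V : ℝ → ℝ be nonnegative and differentiable on [0, ∞) such that V′(t) ≤ −η (1 + t) V(t) + D² / (1 + t) for all t ≥ 0. Then there exists a constant C > 0, depending only on η, such that for all t ≥ 0: V(t) ≤ e^{−η t (t + 2) / 2} V(0) + C · D² / (1 + t)². -/
open Real Set

private lemma keyA' (η x : ℝ) (hη : 0 < η) (hx : 0 ≤ x) :
    4 - η * (1+x)^2 ≤ 4 * (1+x)^4 * Real.exp 1 * Real.exp (-(η * x * (x+2) / 4)) := by
  by_cases h : 4 ≤ η * (1+x)^2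
  · have : 0 ≤ 4 * (1+x)^4 * Real.exp 1 * Real.exp (-(η * x * (x+2) / 4)) := by positivity
    linarith
  · push_neg at h
    have hψ : η * x * (x+2) / 4 ≤ 1 := by nlinarith
    have h1 : (1:ℝ) ≤ Real.exp 1 * Real.exp (-(η * x * (x+2) / 4)) := by
      rw [← Real.exp_add]
      exact Real.one_le_exp (by linarith)
    have h4 : (1:ℝ) ≤ (1+x)^4 := one_le_pow₀ (by linarith)
    nlinarith [mul_le_mul_of_nonneg_left h1 (show (0:ℝ) ≤ 4*(1+x)^4 by positivity),
      mul_nonneg hη.le (sq_nonneg (1+x))]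

private lemma keyB' (η t : ℝ) (hη : 0 < η) (ht : 0 ≤ t) :
    η * (1+t)^2 * Real.exp (-(η * t * (t+2) / 4)) ≤ η + 4 := by
  set ψ := η * t * (t+2) / 4 with hψdef
  have hψ : 0 ≤ ψ := by rw [hψdef]; positivity
  have hE : 0 < Real.exp (-ψ) := Real.exp_pos _
  have h1 : (1 + ψ) * Real.exp (-ψ) ≤ 1 := by
    have h2 := Real.add_one_le_exp ψ
    have h3 := mul_le_mul_of_nonneg_right h2 hE.le
    rwa [← Real.exp_add, add_neg_cancel, Real.exp_zero, add_comm ψ 1] at h3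
  have h2 : η * (1+t)^2 ≤ (η + 4) * (1 + ψ) := by
    rw [hψdef]
    nlinarith [sq_nonneg η, mul_nonneg (mul_nonneg (mul_nonneg hη.le hη.le) ht) (show (0:ℝ) ≤ t+2 by linarith)]
  calc η * (1+t)^2 * Real.exp (-ψ) ≤ (η+4)*(1+ψ)*Real.exp (-ψ) :=
        mul_le_mul_of_nonneg_right h2 hE.le
    _ ≤ (η+4)*1 := by rw [mul_assoc]; exact mul_le_mul_of_nonneg_left h1 (by linarith)
    _ = η + 4 := mul_one _

set_option maxHeartbeats 1000000 in
theorem stmt_3 (η : ℝ) (hη : 0 < η) :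
    ∃ C > (0:ℝ), ∀ (D : ℝ), 0 ≤ D → ∀ (V V' : ℝ → ℝ),
      (∀ t ≥ (0:ℝ), 0 ≤ V t) →
      (∀ t ≥ (0:ℝ), HasDerivWithinAt V (V' t) (Set.Ici 0) t) →
      (∀ t ≥ (0:ℝ), V' t ≤ -η * (1 + t) * V t + D ^ 2 / (1 + t)) →
      ∀ t ≥ (0:ℝ),
        V t ≤ Real.exp (-(η * t * (t + 2) / 2)) * V 0 + C * D ^ 2 / (1 + t) ^ 2 := by
  refine ⟨8*Real.exp 1/η^2*(1+4/η) + 2/η, by positivity, ?_⟩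
  intro D hD V V' hVpos hVd hVle
  set a : ℝ := 8*Real.exp 1/η^2 with ha
  set b : ℝ := 2/η with hb
  have ha0 : 0 < a := by rw [ha]; positivity
  have hb0 : 0 < b := by rw [hb]; positivity
  set U : ℝ → ℝ := fun s => Real.exp (-(η*s*(s+2)/2)) * V 0 +
      D^2*(a*Real.exp (-(η*s*(s+2)/4)) + b/(1+s)^2) with hUdef
  set Z : ℝ → ℝ := fun s => Real.exp (η*s*(s+2)/2) * (V s - U s) with hZdef
  -- derivative of Z at positive points, with sign
  have hZder : ∀ x : ℝ, 0 < x → ∃ z, HasDerivAt Z z x ∧ z ≤ 0 := by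
    intro x hx0
    have h1x : (0:ℝ) < 1 + x := by linarith
    have hφ : HasDerivAt (fun s : ℝ => η*s*(s+2)/2) (η*(1+x)) x := by
      have h : HasDerivAt (fun s : ℝ => η*s*(s+2)/2) ((η*1*(x+2) + η*x*1)/2) x :=
        (((hasDerivAt_id x).const_mul η).mul ((hasDerivAt_id x).add_const 2)).div_const 2
      have he : (η*1*(x+2) + η*x*1)/2 = η*(1+x) := by ring
      rwa [he] at h
    have hψ : HasDerivAt (fun s : ℝ => η*s*(s+2)/4) (η*(1+x)/2) x := by
      have h : HasDerivAt (fun s : ℝ => η*s*(s+2)/4) ((η*1*(x+2) + η*x*1)/4) x :=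
        (((hasDerivAt_id x).const_mul η).mul ((hasDerivAt_id x).add_const 2)).div_const 4
      have he : (η*1*(x+2) + η*x*1)/4 = η*(1+x)/2 := by ring
      rwa [he] at h
    have hpow : HasDerivAt (fun s : ℝ => (1+s)^2) (↑2*(1+x)^(2-1)*1) x :=
      HasDerivAt.pow ((hasDerivAt_id x).const_add 1) 2
    have hq : HasDerivAt (fun s : ℝ => b/(1+s)^2)
        ((0 * (1+x)^2 - b * (↑2*(1+x)^(2-1)*1)) / ((1+x)^2)^2) x :=
      (hasDerivAt_const x b).div hpow (ne_of_gt (pow_pos h1x 2))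
    have hU' : HasDerivAt U
        (Real.exp (-(η*x*(x+2)/2)) * (-(η*(1+x))) * V 0 +
          D^2 * (a * (Real.exp (-(η*x*(x+2)/4)) * (-(η*(1+x)/2))) +
            (0 * (1+x)^2 - b * (↑2*(1+x)^(2-1)*1)) / ((1+x)^2)^2)) x := by
      rw [hUdef]
      exact ((hφ.neg.exp).mul_const (V 0)).add
        (((((hψ.neg.exp).const_mul a)).add hq).const_mul (D^2))
    have hV' : HasDerivAt V (V' x) x :=
      (hVd x hx0.le).hasDerivAt (Ici_mem_nhds hx0)
    refine ⟨_, (hφ.exp).mul (hV'.sub hU'), ?_⟩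
    -- the sign condition
    have hiq := hVle x hx0.le
    have key := keyA' η x hη hx0.le
    have hE3 : (0:ℝ) < Real.exp (-(η*x*(x+2)/4)) := Real.exp_pos _
    have hΔ : (-(η*(1+x)) * U x + D^2/(1+x)) -
        (Real.exp (-(η*x*(x+2)/2)) * (-(η*(1+x))) * V 0 +
          D^2 * (a * (Real.exp (-(η*x*(x+2)/4)) * (-(η*(1+x)/2))) +
            (0 * (1+x)^2 - b * (↑2*(1+x)^(2-1)*1)) / ((1+x)^2)^2)) =
        D^2 * ((4 - η*(1+x)^2 - 4*(1+x)^4*Real.exp 1*Real.exp (-(η*x*(x+2)/4))) /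
          (η*(1+x)^3)) := by
      rw [hUdef, ha, hb]
      field_simp
      ring
    have hΔ0 : D^2 * ((4 - η*(1+x)^2 - 4*(1+x)^4*Real.exp 1*Real.exp (-(η*x*(x+2)/4))) /
          (η*(1+x)^3)) ≤ 0 := by
      apply mul_nonpos_of_nonneg_of_nonpos (sq_nonneg D)
      apply div_nonpos_of_nonpos_of_nonneg (by linarith) (by positivity)
    have hcore : η*(1+x)*(V x - U x) + (V' x -
        (Real.exp (-(η*x*(x+2)/2)) * (-(η*(1+x))) * V 0 +
          D^2 * (a * (Real.exp (-(η*x*(x+2)/4)) * (-(η*(1+x)/2))) +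
            (0 * (1+x)^2 - b * (↑2*(1+x)^(2-1)*1)) / ((1+x)^2)^2))) ≤ 0 := by
      nlinarith [hiq, hΔ, hΔ0]
    have hE1 : (0:ℝ) < Real.exp (η*x*(x+2)/2) := Real.exp_pos _
    have hm := mul_le_mul_of_nonneg_left hcore hE1.le
    rw [mul_zero] at hm
    nlinarith [hm]
  -- antitone
  have hVc : ContinuousOn V (Ici 0) := fun s hs => (hVd s hs).continuousWithinAt
  have hUc : ContinuousOn U (Ici 0) := by
    rw [hUdef]
    apply ContinuousOn.add
    · exact Continuous.continuousOn (by fun_prop)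
    · apply ContinuousOn.mul continuousOn_const
      apply ContinuousOn.add (Continuous.continuousOn (by fun_prop))
      refine ContinuousOn.div continuousOn_const (Continuous.continuousOn (by fun_prop)) ?_
      intro s hs
      have hs0 : (0:ℝ) ≤ s := hs
      positivity
  have hZc : ContinuousOn Z (Ici 0) := by
    rw [hZdef]
    exact (Continuous.continuousOn (by fun_prop)).mul (hVc.sub hUc)
  have hanti : AntitoneOn Z (Ici 0) := by
    apply antitoneOn_of_deriv_nonpos (convex_Ici 0) hZc
    · intro x hx
      rw [interior_Ici] at hx
      exact ((hZder x hx).choose_spec.1).differentiableAt.differentiableWithinAt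
    · intro x hx
      rw [interior_Ici] at hx
      obtain ⟨z, hz, hz0⟩ := hZder x hx
      rw [hz.deriv]; exact hz0
  -- conclude
  have hUs : ∀ s : ℝ, U s = Real.exp (-(η*s*(s+2)/2)) * V 0 +
      D^2*(a*Real.exp (-(η*s*(s+2)/4)) + b/(1+s)^2) := fun _ => rfl
  have hZs : ∀ s : ℝ, Z s = Real.exp (η*s*(s+2)/2) * (V s - U s) := fun _ => rfl
  clear_value Z U
  intro t ht
  have hZt : Z t ≤ Z 0 := hanti (self_mem_Ici) ht ht
  have hZ0 : Z 0 ≤ 0 := by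
    rw [hZs 0, hUs 0]
    have hab : (0:ℝ) ≤ D^2*(a+b) := by positivity
    have e1 : η*(0:ℝ)*(0+2)/2 = 0 := by ring
    have e2 : η*(0:ℝ)*(0+2)/4 = 0 := by ring
    rw [e1, e2]
    norm_num [Real.exp_zero]
    nlinarith [hab]
  have hE : (0:ℝ) < Real.exp (η*t*(t+2)/2) := Real.exp_pos _
  have hZt' : Real.exp (η*t*(t+2)/2) * (V t - U t) ≤ 0 := by
    rw [← hZs t]; linarith
  have hVU : V t ≤ U t := by
    have h0 : Real.exp (η*t*(t+2)/2) * (V t - U t) ≤ Real.exp (η*t*(t+2)/2) * 0 := by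
      rw [mul_zero]; exact hZt'
    have h1 := (mul_le_mul_iff_right₀ hE).mp h0
    linarith
  have h1t : (0:ℝ) < 1 + t := by linarith
  have hkB := keyB' η t hη ht
  have hE3 : Real.exp (-(η*t*(t+2)/4)) ≤ (η+4)/(η*(1+t)^2) := by
    rw [le_div_iff₀ (by positivity)]
    nlinarith [hkB]
  have hUle : U t ≤ Real.exp (-(η*t*(t+2)/2)) * V 0 + (a*(1+4/η)+b)*D^2/(1+t)^2 := by
    rw [hUs t]
    have h2 : a*Real.exp (-(η*t*(t+2)/4)) ≤ a*((η+4)/(η*(1+t)^2)) :=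
      mul_le_mul_of_nonneg_left hE3 ha0.le
    have h3 : a*((η+4)/(η*(1+t)^2)) + b/(1+t)^2 = (a*(1+4/η)+b)/(1+t)^2 := by
      field_simp
    have h4 : a*Real.exp (-(η*t*(t+2)/4)) + b/(1+t)^2 ≤ (a*(1+4/η)+b)/(1+t)^2 := by
      rw [← h3]; linarith
    have h5 := mul_le_mul_of_nonneg_left h4 (sq_nonneg D)
    have h6 : (a*(1+4/η)+b)*D^2/(1+t)^2 = D^2*((a*(1+4/η)+b)/(1+t)^2) := by ring
    rw [h6]
    linarith
  calc V t ≤ U t := hVU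
    _ ≤ Real.exp (-(η*t*(t+2)/2)) * V 0 + (a*(1+4/η)+b)*D^2/(1+t)^2 := hUle
    _ = Real.exp (-(η * t * (t + 2) / 2)) * V 0 + (a*(1+4/η) + b) * D ^ 2 / (1 + t) ^ 2 := by ring
end

section
/- For every η > 0 there exists a finite constant C > 0 such that for all τ ≥ 0: (2 τ / η + 1) · ∫₀^τ e^{−(τ − s)} / (2 s / η + 1) ds ≤ C. -/
open Real MeasureTheory intervalIntegral

theorem stmt_4 (η : ℝ) (hη : 0 < η) :
    ∃ C > (0:ℝ), ∀ τ ≥ (0:ℝ),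
      (2 * τ / η + 1) *
        ∫ s in (0:ℝ)..τ, Real.exp (-(τ - s)) / (2 * s / η + 1) ≤ C := by
  refine ⟨1 + 2 / η, by positivity, fun τ hτ => ?_⟩
  -- antiderivative
  set F : ℝ → ℝ := fun u => -(1 + 2 * (u + 1) / η) * Real.exp (-u) with hFdef
  have hF : ∀ u : ℝ, HasDerivAt F (Real.exp (-u) * (1 + 2 * u / η)) u := by
    intro u
    have h1 : HasDerivAt (fun u : ℝ => -(1 + 2 * (u + 1) / η)) (-(2 / η)) u := by
      have h := ((((hasDerivAt_id u).add_const 1).const_mul 2).div_const η).neg.const_add (-1)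
      have heq : (fun u : ℝ => -1 + -(2 * (u + 1) / η)) =
          fun u : ℝ => -(1 + 2 * (u + 1) / η) := by funext x; ring
      simpa [heq, mul_one] using h
    have h2 : HasDerivAt (fun u : ℝ => Real.exp (-u)) (-Real.exp (-u)) u := by
      simpa [Function.comp_def] using (Real.hasDerivAt_exp (-u)).comp u ((hasDerivAt_id u).neg)
    have h := h1.mul h2
    exact h.congr_deriv (by ring)
  have hcont : Continuous fun u : ℝ => Real.exp (-u) * (1 + 2 * u / η) := by continuity
  have hFTC : ∫ u in (0:ℝ)..τ, Real.exp (-u) * (1 + 2 * u / η) = F τ - F 0 :=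
    intervalIntegral.integral_eq_sub_of_hasDerivAt (fun u _ => hF u)
      (hcont.intervalIntegrable 0 τ)
  -- integrability of the original integrand (times constant) on [0, τ]
  have hIcc : Set.uIcc (0:ℝ) τ = Set.Icc 0 τ := Set.uIcc_of_le hτ
  have hint1 : IntervalIntegrable
      (fun s => (2 * τ / η + 1) * (Real.exp (-(τ - s)) / (2 * s / η + 1)))
      volume 0 τ := by
    apply ContinuousOn.intervalIntegrable
    rw [hIcc]
    apply ContinuousOn.mul continuousOn_const
    apply ContinuousOn.div
    · exact (Continuous.continuousOn (by continuity))
    · exact (Continuous.continuousOn (by continuity))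
    · intro s hs
      have hs0 : (0:ℝ) ≤ s := hs.1
      have : 0 < 2 * s / η + 1 := by positivity
      exact ne_of_gt this
  have hint2 : IntervalIntegrable
      (fun s => Real.exp (-(τ - s)) * (1 + 2 * (τ - s) / η)) volume 0 τ :=
    (Continuous.intervalIntegrable (by continuity) 0 τ)
  -- pointwise bound
  have hpt : ∀ s ∈ Set.Icc (0:ℝ) τ,
      (2 * τ / η + 1) * (Real.exp (-(τ - s)) / (2 * s / η + 1)) ≤
        Real.exp (-(τ - s)) * (1 + 2 * (τ - s) / η) := by
    intro s hs
    have hs0 : (0:ℝ) ≤ s := hs.1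
    have hsτ : s ≤ τ := hs.2
    have hd : 0 < 2 * s / η + 1 := by positivity
    have hE : 0 < Real.exp (-(τ - s)) := Real.exp_pos _
    have key : (2 * τ / η + 1) ≤ (2 * s / η + 1) * (1 + 2 * (τ - s) / η) := by
      have h1 : 0 ≤ s * (τ - s) := mul_nonneg hs0 (sub_nonneg.2 hsτ)
      have h2 : 0 < η * η := mul_pos hη hη
      have h3 : (2 * s / η + 1) * (1 + 2 * (τ - s) / η)
          = 2 * τ / η + 1 + 4 * (s * (τ - s)) / (η * η) := by
        field_simp
        ring
      rw [h3]
      have h4 : 0 ≤ 4 * (s * (τ - s)) / (η * η) := by positivity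
      linarith
    rw [mul_div_assoc', div_le_iff₀ hd]
    nlinarith [mul_le_mul_of_nonneg_right key hE.le]
  -- chain
  calc (2 * τ / η + 1) * ∫ s in (0:ℝ)..τ, Real.exp (-(τ - s)) / (2 * s / η + 1)
      = ∫ s in (0:ℝ)..τ, (2 * τ / η + 1) * (Real.exp (-(τ - s)) / (2 * s / η + 1)) := by
        rw [intervalIntegral.integral_const_mul]
    _ ≤ ∫ s in (0:ℝ)..τ, Real.exp (-(τ - s)) * (1 + 2 * (τ - s) / η) := by
        apply intervalIntegral.integral_mono_on hτ hint1 hint2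
        exact hpt
    _ = ∫ u in (0:ℝ)..τ, Real.exp (-u) * (1 + 2 * u / η) := by
        simpa using intervalIntegral.integral_comp_sub_left
          (fun u => Real.exp (-u) * (1 + 2 * u / η)) τ (a := 0) (b := τ)
    _ = F τ - F 0 := hFTC
    _ ≤ 1 + 2 / η := by
        have h1 : 0 < Real.exp (-τ) := Real.exp_pos _
        have h2 : 0 ≤ 1 + 2 * (τ + 1) / η := by positivity
        simp only [hFdef]
        have : -(1 + 2 * (τ + 1) / η) * Real.exp (-τ) ≤ 0 := by nlinarith
        have hF0 : -(1 + 2 * (0 + 1) / η) * Real.exp (-(0:ℝ)) = -(1 + 2 / η) := by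
          norm_num
        nlinarith
end

section
/- Let 0 < η < 2, D ≥ 0, and let W : ℝ → ℝ be differentiable on [0, ∞) with W′(τ) ≤ −W(τ) + D² / (4 η (2 τ / η + 1)) for all τ ≥ 0. Then for all τ ≥ 0: W(τ) ≤ e^{−τ} W(0) + (D² / (4 η)) · r_{2/η, 1} / (2 τ / η + 1), where r_{a,α} = (aα)^α · ∫₀^{(aα−1)/a} e^{s − (aα−1)/a} (a s + 1)^{−α} ds + (aα + 1) + ((aα+1)/(aα))^α · (1 − e^{−1/a}), evaluated at a = 2/η and α = 1. -/
open Real MeasureTheory intervalIntegral Set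

lemma pos_lin (a : ℝ) (ha : 0 < a) (x : ℝ) (hx : -(1/a) < x) : 0 < a * x + 1 := by
  have h1 : a * (1/a) = 1 := by field_simp
  nlinarith [mul_lt_mul_of_pos_left hx ha]

lemma contOn (a : ℝ) (ha : 0 < a) :
    ContinuousOn (fun s => Real.exp s * (a*s+1)⁻¹) (Ioi (-(1/a))) := by
  refine ContinuousOn.mul Real.continuous_exp.continuousOn (ContinuousOn.inv₀ (by fun_prop) ?_)
  exact fun x hx => (pos_lin a ha x hx).ne'

lemma intInt (a : ℝ) (ha : 0 < a) (τ : ℝ) (hτ : 0 ≤ τ) :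
    IntervalIntegrable (fun s => Real.exp s * (a*s+1)⁻¹) volume 0 τ := by
  have h0 : (0:ℝ) < 1/a := by positivity
  refine ((contOn a ha).mono ?_).intervalIntegrable
  intro x hx
  rw [uIcc_of_le hτ] at hx
  exact mem_Ioi.mpr (by linarith [hx.1])

lemma hasDerivG (a : ℝ) (ha : 0 < a) (τ : ℝ) (hτ : 0 ≤ τ) :
    HasDerivAt (fun x => ∫ s in (0:ℝ)..x, Real.exp s * (a*s+1)⁻¹)
      (Real.exp τ * (a*τ+1)⁻¹) τ := by
  have hopen : IsOpen (Ioi (-(1/a))) := isOpen_Ioi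
  have hmem : τ ∈ Ioi (-(1/a)) := by
    have : (0:ℝ) < 1/a := by positivity
    exact mem_Ioi.mpr (by linarith)
  exact intervalIntegral.integral_hasDerivAt_right (intInt a ha τ hτ)
    ((contOn a ha).stronglyMeasurableAtFilter hopen τ hmem)
    ((contOn a ha).continuousAt (hopen.mem_nhds hmem))

lemma key (a : ℝ) (ha : 0 < a) (τ : ℝ) (hτ : 0 ≤ τ) :
    ∫ s in (0:ℝ)..τ, Real.exp s * (a*s+1)⁻¹ ≤ (a+1) * Real.exp τ * (a*τ+1)⁻¹ := by
  set f := fun s => Real.exp s * (a*s+1)⁻¹ with hf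
  set h := fun x => (a+1) * Real.exp x * (a*x+1)⁻¹ - ∫ s in (0:ℝ)..x, f s with hh
  have hpos : ∀ x : ℝ, 0 ≤ x → 0 < a*x+1 := fun x hx => by nlinarith
  have hd : ∀ x : ℝ, 0 ≤ x → HasDerivAt h (a^2 * Real.exp x * (x-1) * ((a*x+1)^2)⁻¹) x := by
    intro x hx
    have h1 : HasDerivAt (fun x => (a+1) * Real.exp x) ((a+1) * Real.exp x) x :=
      (Real.hasDerivAt_exp x).const_mul _
    have h2 : HasDerivAt (fun x => (a*x+1)) a x := by
      simpa using ((hasDerivAt_id x).const_mul a).add_const 1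
    have h3 : HasDerivAt (fun x => (a*x+1)⁻¹) (-a / (a*x+1)^2) x := h2.inv (hpos x hx).ne'
    have h5 := (h1.mul h3).sub (hasDerivG a ha x hx)
    refine h5.congr_deriv ?_
    have hne := (hpos x hx).ne'
    field_simp
    ring
  have hcont : ContinuousOn h (Ici 0) := fun x hx => (hd x hx).continuousAt.continuousWithinAt
  have hanti : AntitoneOn h (Icc 0 1) := by
    apply antitoneOn_of_deriv_nonpos (convex_Icc 0 1) (hcont.mono Icc_subset_Ici_self)
    · intro x hx
      rw [interior_Icc] at hx
      exact (hd x hx.1.le).differentiableAt.differentiableWithinAt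
    · intro x hx
      rw [interior_Icc] at hx
      rw [(hd x hx.1.le).deriv]
      have hp := hpos x hx.1.le
      have h6 : a^2 * Real.exp x * (x-1) * ((a*x+1)^2)⁻¹
          = (a^2 * Real.exp x * ((a*x+1)^2)⁻¹) * (x-1) := by ring
      rw [h6]
      exact mul_nonpos_of_nonneg_of_nonpos (by positivity) (by linarith [hx.2])
  have hmono : MonotoneOn h (Ici 1) := by
    apply monotoneOn_of_deriv_nonneg (convex_Ici 1)
      (hcont.mono (Ici_subset_Ici.mpr zero_le_one))
    · intro x hx
      rw [interior_Ici] at hx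
      exact (hd x (by linarith [mem_Ioi.mp hx])).differentiableAt.differentiableWithinAt
    · intro x hx
      rw [interior_Ici] at hx
      have hx1 : (1:ℝ) < x := hx
      rw [(hd x (by linarith)).deriv]
      have hp := hpos x (by linarith : (0:ℝ) ≤ x)
      exact mul_nonneg (mul_nonneg (by positivity) (by linarith)) (by positivity)
  have h1val : 0 ≤ h 1 := by
    have hint1 : IntervalIntegrable f volume 0 1 := intInt a ha 1 zero_le_one
    have hint2 : IntervalIntegrable Real.exp volume 0 1 :=
      Real.continuous_exp.intervalIntegrable 0 1
    have hle : ∫ s in (0:ℝ)..1, f s ≤ ∫ s in (0:ℝ)..1, Real.exp s := by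
      apply intervalIntegral.integral_mono_on zero_le_one hint1 hint2
      intro s hs
      have hp := hpos s hs.1
      have hinv : (a*s+1)⁻¹ ≤ 1 := by
        rw [inv_le_one_iff₀]
        right
        nlinarith [hs.1]
      calc f s = Real.exp s * (a*s+1)⁻¹ := rfl
        _ ≤ Real.exp s * 1 := by
            exact mul_le_mul_of_nonneg_left hinv (Real.exp_pos s).le
        _ = Real.exp s := mul_one _
    have hev : ∫ s in (0:ℝ)..1, Real.exp s = Real.exp 1 - 1 := by
      simp [integral_exp]
    have ha1 : a * 1 + 1 = a + 1 := by ring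
    have hne : (a+1) ≠ 0 := by positivity
    have hval : (a+1) * Real.exp 1 * (a*1+1)⁻¹ = Real.exp 1 := by
      rw [ha1]; field_simp
    simp only [hh]
    rw [hval]
    linarith
  have hτ0 : 0 ≤ h τ := by
    rcases le_total τ 1 with hc | hc
    · have := hanti (mem_Icc.mpr ⟨hτ, hc⟩) (mem_Icc.mpr ⟨zero_le_one, le_refl 1⟩) hc
      linarith
    · have := hmono (mem_Ici.mpr (le_refl 1)) (mem_Ici.mpr hc) hc
      linarith
  simp only [hh] at hτ0
  linarith
theorem stmt_5 (η : ℝ) (hη0 : 0 < η) (hη2 : η < 2) (D : ℝ) (hD : 0 ≤ D)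
    (W W' : ℝ → ℝ)
    (hW : ∀ τ ≥ (0:ℝ), HasDerivWithinAt W (W' τ) (Set.Ici 0) τ)
    (hineq : ∀ τ ≥ (0:ℝ), W' τ ≤ -W τ + D ^ 2 / (4 * η * (2 * τ / η + 1))) :
    ∀ τ ≥ (0:ℝ),
      W τ ≤ Real.exp (-τ) * W 0 +
        (D ^ 2 / (4 * η)) *
          (((2 / η) * 1) ^ (1:ℝ) *
              (∫ s in (0:ℝ)..(((2 / η) * 1 - 1) / (2 / η)),
                Real.exp (s - ((2 / η) * 1 - 1) / (2 / η)) *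
                  ((2 / η) * s + 1) ^ (-(1:ℝ)))
            + ((2 / η) * 1 + 1)
            + (((2 / η) * 1 + 1) / ((2 / η) * 1)) ^ (1:ℝ) *
                (1 - Real.exp (-(1 / (2 / η))))) / (2 * τ / η + 1) := by
  intro τ hτ
  set a : ℝ := 2 / η with hadef
  set c : ℝ := D ^ 2 / (4 * η) with hcdef
  have ha : 0 < a := by rw [hadef]; positivity
  have ha1 : 1 < a := by rw [hadef]; exact (one_lt_div hη0).mpr hη2
  have hc : 0 ≤ c := by rw [hcdef]; positivity
  have hpos : ∀ x : ℝ, 0 ≤ x → 0 < a * x + 1 := fun x hx => by nlinarith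
  set u : ℝ → ℝ := fun x => Real.exp x * W x - c * ∫ s in (0:ℝ)..x, Real.exp s * (a*s+1)⁻¹
    with hudef
  have hu : ∀ x ∈ Ici (0:ℝ), HasDerivWithinAt u
      (Real.exp x * W x + Real.exp x * W' x - c * (Real.exp x * (a*x+1)⁻¹)) (Ici 0) x := by
    intro x hx
    exact ((Real.hasDerivAt_exp x).hasDerivWithinAt.mul (hW x hx)).sub
      (((hasDerivG a ha x hx).const_mul c).hasDerivWithinAt)
  have heq : ∀ x : ℝ, 0 ≤ x → D ^ 2 / (4 * η * (2 * x / η + 1)) = c * (a*x+1)⁻¹ := by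
    intro x hx
    have h1 := (hpos x hx).ne'
    have h2 : 2 * x / η + 1 = a * x + 1 := by
      rw [hadef]; ring
    rw [h2, hcdef]
    rw [hadef] at h1 ⊢
    field_simp
  have hanti : AntitoneOn u (Ici 0) := by
    apply antitoneOn_of_deriv_nonpos (convex_Ici 0)
    · exact fun x hx => (hu x hx).continuousWithinAt
    · intro x hx
      rw [interior_Ici] at hx
      exact (((hu x (mem_Ici.mpr (le_of_lt hx))).hasDerivAt
        (Ici_mem_nhds hx)).differentiableAt).differentiableWithinAt
    · intro x hx
      rw [interior_Ici] at hx
      rw [((hu x (mem_Ici.mpr hx.le)).hasDerivAt (Ici_mem_nhds hx)).deriv]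
      have he := hineq x hx.le
      rw [heq x hx.le] at he
      nlinarith [Real.exp_pos x, mul_le_mul_of_nonneg_left he (Real.exp_pos x).le]
  have hu0 : u τ ≤ u 0 := hanti (self_mem_Ici) (mem_Ici.mpr hτ) hτ
  have hu0v : u 0 = W 0 := by
    simp [hudef]
  have hmain : Real.exp τ * W τ ≤ W 0 + c * ((a+1) * Real.exp τ * (a*τ+1)⁻¹) := by
    have hk := key a ha τ hτ
    have h3 : Real.exp τ * W τ - (c * ∫ s in (0:ℝ)..τ, Real.exp s * (a*s+1)⁻¹) ≤ W 0 := by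
      calc Real.exp τ * W τ - (c * ∫ s in (0:ℝ)..τ, Real.exp s * (a*s+1)⁻¹) = u τ := rfl
        _ ≤ u 0 := hu0
        _ = W 0 := hu0v
    have h4 := mul_le_mul_of_nonneg_left hk hc
    linarith [h3, h4]
  have hWτ : W τ ≤ Real.exp (-τ) * W 0 + c * (a+1) * (a*τ+1)⁻¹ := by
    have hexp := Real.exp_pos τ
    rw [← mul_le_mul_iff_right₀ hexp]
    have hee : Real.exp τ * (Real.exp (-τ) * W 0) = W 0 := by
      rw [← mul_assoc, ← Real.exp_add]; simp
    calc Real.exp τ * W τ ≤ W 0 + c * ((a+1) * Real.exp τ * (a*τ+1)⁻¹) := hmain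
      _ = Real.exp τ * (Real.exp (-τ) * W 0 + c * (a+1) * (a*τ+1)⁻¹) := by
          rw [mul_add, hee]; ring
  have hden : 2 * τ / η + 1 = a * τ + 1 := by rw [hadef]; ring
  rw [hden, div_eq_mul_inv]
  have hR : a + 1 ≤ (a*1) ^ (1:ℝ) *
      (∫ s in (0:ℝ)..((a*1 - 1)/a), Real.exp (s - (a*1 - 1)/a) * (a*s+1) ^ (-(1:ℝ)))
      + (a*1 + 1) + ((a*1 + 1)/(a*1)) ^ (1:ℝ) * (1 - Real.exp (-(1/a))) := by
    simp only [Real.rpow_one, mul_one]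
    have hb0 : 0 ≤ (a - 1) / a := div_nonneg (by linarith) ha.le
    have hI : 0 ≤ ∫ s in (0:ℝ)..((a-1)/a), Real.exp (s - (a-1)/a) * (a*s+1) ^ (-(1:ℝ)) := by
      apply intervalIntegral.integral_nonneg hb0
      intro s hs
      exact mul_nonneg (Real.exp_pos _).le (Real.rpow_nonneg (by nlinarith [hs.1]) _)
    have hexp1 : Real.exp (-(1/a)) ≤ 1 := Real.exp_le_one_iff.mpr (neg_nonpos.mpr
      (by positivity))
    have h2 : 0 ≤ (a+1)/a * (1 - Real.exp (-(1/a))) :=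
      mul_nonneg (by positivity) (by linarith)
    linarith [mul_nonneg ha.le hI, h2]
  have hinv : (0:ℝ) ≤ (a * τ + 1)⁻¹ := (inv_nonneg).mpr (hpos τ hτ).le
  have hfin := mul_le_mul_of_nonneg_right (mul_le_mul_of_nonneg_left hR hc) hinv
  linarith [hWτ, hfin]
end

section
/- Let H be a real Hilbert space, K > 1/2, and set η := 2K − 1. Let X : ℝ → H be differentiable on [0, ∞), and let g, d : ℝ → H be such that for all t ≥ 0: X′(t) = −g(t) − K (1 + t) X(t) + d(t), ⟨g(t), X(t)⟩ ≥ 0, and ‖d(t)‖ ≤ D for a constant D ≥ 0. Then there exists a constant C > 0, depending only on η, such that for all t ≥ 0: ‖X(t)‖² ≤ e^{−η t (t + 2) / 2} ‖X(0)‖² + C · D² / (1 + t)². In particular, when D = 0 the state decays hyperexponentially, i.e. faster than any exponential rate. -/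
open Real Set

private lemma aux_deriv_phi (c : ℝ) (t : ℝ) :
    HasDerivAt (fun s : ℝ => c * (s * (s + 2)) / 2) (c * (1 + t)) t := by
  have h := (((hasDerivAt_id t).mul ((hasDerivAt_id t).add_const 2)).const_mul c).div_const 2
  refine h.congr_deriv ?_
  simp [id]
  ring

set_option maxHeartbeats 1000000 in
private lemma aux_comp (η : ℝ) (hη0 : 0 < η) (D : ℝ) (y0 : ℝ) (hy0 : 0 ≤ y0)
    (y : ℝ → ℝ) (hyc : ContinuousOn y (Ici 0)) (hy00 : y 0 ≤ y0)
    (hy' : ∀ t > (0:ℝ), ∃ y', HasDerivAt y y' t ∧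
      y' ≤ -((η + 1/2) * (1 + t)) * y t + 2 * D ^ 2 / (1 + t)) :
    ∀ t ≥ (0:ℝ), y t ≤ Real.exp (-(η * (t * (t + 2)) / 2)) * y0 +
      D ^ 2 * (4 / (η + 1/2) / (1 + t) ^ 2 +
        32 * Real.exp 2 / (η + 1/2) * Real.exp (-(η * (t * (t + 2)) / 2))) := by
  set l : ℝ := η + 1/2 with hldef
  have hl0 : 0 < l := by rw [hldef]; linarith
  set a : ℝ := 4 / l with hadef
  set b : ℝ := 32 * Real.exp 2 / l with hbdef
  have ha0 : 0 < a := by rw [hadef]; positivity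
  have hb0 : 0 < b := by rw [hbdef]; positivity
  set u : ℝ → ℝ := fun t => Real.exp (-(η * (t * (t + 2)) / 2)) * y0 +
      D ^ 2 * (a / (1 + t) ^ 2 + b * Real.exp (-(η * (t * (t + 2)) / 2))) with hudef
  set F : ℝ → ℝ := fun t => Real.exp (l * (t * (t + 2)) / 2) * (y t - u t) with hFdef
  have hEder : ∀ t : ℝ, HasDerivAt (fun s => Real.exp (-(η * (s * (s + 2)) / 2)))
      (Real.exp (-(η * (t * (t + 2)) / 2)) * (-(η * (1 + t)))) t := fun t =>
    ((aux_deriv_phi η t).neg).exp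
  have hUder : ∀ t : ℝ, 0 ≤ t → HasDerivAt u
      (Real.exp (-(η * (t * (t + 2)) / 2)) * (-(η * (1 + t))) * y0 +
        D ^ 2 * ((0 * (1 + t) ^ 2 - a * (2 * (1 + t))) / ((1 + t) ^ 2) ^ 2 +
          b * (Real.exp (-(η * (t * (t + 2)) / 2)) * (-(η * (1 + t)))))) t := by
    intro t ht
    have h1t : (0:ℝ) < 1 + t := by linarith
    have hpow : HasDerivAt (fun s : ℝ => (1 + s) ^ 2) (2 * (1 + t)) t := by
      have h := ((hasDerivAt_id t).const_add 1).pow 2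
      refine h.congr_deriv ?_
      push_cast
      simp [id]
    have hdiv : HasDerivAt (fun s : ℝ => a / (1 + s) ^ 2)
        ((0 * (1 + t) ^ 2 - a * (2 * (1 + t))) / ((1 + t) ^ 2) ^ 2) t :=
      (hasDerivAt_const t a).div hpow (pow_ne_zero 2 h1t.ne')
    rw [hudef]
    exact ((hEder t).mul_const y0).add
      ((hdiv.add ((hEder t).const_mul b)).const_mul (D ^ 2))
  -- F is antitone
  have hFle : ∀ t ≥ (0:ℝ), F t ≤ F 0 := by
    have hFc : ContinuousOn F (Ici 0) := by
      rw [hFdef]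
      apply ContinuousOn.mul
      · exact (Real.continuous_exp.comp (by fun_prop)).continuousOn
      · exact hyc.sub (fun s hs => (hUder s hs).continuousAt.continuousWithinAt)
    have hFd : ∀ t ∈ interior (Ici (0:ℝ)), ∃ F', F' ≤ 0 ∧ HasDerivAt F F' t := by
      intro t htm
      rw [interior_Ici] at htm
      have ht0 : (0:ℝ) < t := htm
      have h1t : (0:ℝ) < 1 + t := by linarith
      obtain ⟨y', hyd, hyle⟩ := hy' t ht0
      -- nicer form of the derivative of u
      have hu' : HasDerivAt u
          ((1 + t) / 2 * Real.exp (-(η * (t * (t + 2)) / 2)) * y0 +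
            D ^ 2 * (a * l / (1 + t) - 2 * a / (1 + t) ^ 3 +
              b / 2 * (1 + t) * Real.exp (-(η * (t * (t + 2)) / 2)))
            - l * (1 + t) * u t) t := by
        have h := hUder t ht0.le
        convert h using 1
        rw [hudef]
        simp only
        rw [hldef]
        field_simp
        ring
      have hF : HasDerivAt F
          (Real.exp (l * (t * (t + 2)) / 2) * (l * (1 + t)) * (y t - u t) +
            Real.exp (l * (t * (t + 2)) / 2) *
              (y' - ((1 + t) / 2 * Real.exp (-(η * (t * (t + 2)) / 2)) * y0 +
                D ^ 2 * (a * l / (1 + t) - 2 * a / (1 + t) ^ 3 +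
                  b / 2 * (1 + t) * Real.exp (-(η * (t * (t + 2)) / 2)))
                - l * (1 + t) * u t))) t := by
        rw [hFdef]
        exact ((aux_deriv_phi l t).exp).mul (hyd.sub hu')
      refine ⟨_, ?_, hF⟩
      -- show the derivative is nonpositive
      have hE0 : (0:ℝ) < Real.exp (-(η * (t * (t + 2)) / 2)) := Real.exp_pos _
      -- the bracket inequality
      have hBr : 2 / (1 + t) ≤ a * l / (1 + t) - 2 * a / (1 + t) ^ 3 +
          b / 2 * (1 + t) * Real.exp (-(η * (t * (t + 2)) / 2)) := by
        have hal : a * l = 4 := by rw [hadef]; field_simp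
        have hcore : 8 / l ≤ 2 * (1 + t) ^ 2 +
            b / 2 * (1 + t) ^ 4 * Real.exp (-(η * (t * (t + 2)) / 2)) := by
          rcases le_or_gt (4 / l) ((1 + t) ^ 2) with h | h
          · have h8 : 8 / l ≤ 2 * (1 + t) ^ 2 := by
              have : 8 / l = 2 * (4 / l) := by ring
              linarith
            have hterm : (0:ℝ) ≤ b / 2 * (1 + t) ^ 4 *
                Real.exp (-(η * (t * (t + 2)) / 2)) := by positivity
            linarith
          · -- small t case
            have hs1 : (1:ℝ) ≤ 1 + t := by linarith
            have hηl : η ≤ l := by rw [hldef]; linarith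
            have h4 : η * (1 + t) ^ 2 ≤ 4 := by
              have h2 : η * (1 + t) ^ 2 ≤ η * (4 / l) :=
                mul_le_mul_of_nonneg_left h.le hη0.le
              have h3 : η * (4 / l) ≤ 4 := by
                rw [mul_div_assoc', div_le_iff₀ hl0]
                nlinarith
              linarith
            have hφle : η * (t * (t + 2)) / 2 ≤ 2 := by nlinarith
            have hE2 : Real.exp (-2) ≤ Real.exp (-(η * (t * (t + 2)) / 2)) :=
              Real.exp_le_exp.mpr (by linarith)
            have hbe : b / 2 * Real.exp (-2) = 16 / l := by
              have hexpne : Real.exp 2 ≠ 0 := (Real.exp_pos 2).ne'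
              rw [hbdef, Real.exp_neg]
              field_simp
              ring
            have h14 : (1:ℝ) ≤ (1 + t) ^ 4 := one_le_pow₀ hs1
            have hb2 : (0:ℝ) ≤ b / 2 := by linarith
            have hstep : 16 / l ≤ b / 2 * (1 + t) ^ 4 * Real.exp (-(η * (t * (t + 2)) / 2)) := by
              calc 16 / l = b / 2 * Real.exp (-2) := hbe.symm
                _ ≤ b / 2 * Real.exp (-(η * (t * (t + 2)) / 2)) :=
                    mul_le_mul_of_nonneg_left hE2 hb2
                _ ≤ b / 2 * Real.exp (-(η * (t * (t + 2)) / 2)) * (1 + t) ^ 4 :=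
                    le_mul_of_one_le_right (by positivity) h14
                _ = b / 2 * (1 + t) ^ 4 * Real.exp (-(η * (t * (t + 2)) / 2)) := by ring
            have h816 : 8 / l ≤ 16 / l := by gcongr <;> norm_num
            have hsq : (0:ℝ) ≤ (1 + t) ^ 2 := by positivity
            linarith
        -- convert hcore into divided form
        have hdiff : a * l / (1 + t) - 2 * a / (1 + t) ^ 3 +
            b / 2 * (1 + t) * Real.exp (-(η * (t * (t + 2)) / 2)) - 2 / (1 + t)
            = (2 * (1 + t) ^ 2 + b / 2 * (1 + t) ^ 4 *
                Real.exp (-(η * (t * (t + 2)) / 2)) - 8 / l) / (1 + t) ^ 3 := by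
          rw [hal, hadef]
          field_simp
          ring
        have hnum : 0 ≤ (2 * (1 + t) ^ 2 + b / 2 * (1 + t) ^ 4 *
            Real.exp (-(η * (t * (t + 2)) / 2)) - 8 / l) / (1 + t) ^ 3 := by
          apply div_nonneg (by linarith) (by positivity)
        linarith [hdiff ▸ hnum]
      -- combine
      have hD2 : D ^ 2 * (2 / (1 + t)) ≤ D ^ 2 * (a * l / (1 + t) - 2 * a / (1 + t) ^ 3 +
          b / 2 * (1 + t) * Real.exp (-(η * (t * (t + 2)) / 2))) :=
        mul_le_mul_of_nonneg_left hBr (sq_nonneg D)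
      have hy0term : (0:ℝ) ≤ (1 + t) / 2 * Real.exp (-(η * (t * (t + 2)) / 2)) * y0 :=
        mul_nonneg (by positivity) hy0
      have hinner : y' - ((1 + t) / 2 * Real.exp (-(η * (t * (t + 2)) / 2)) * y0 +
            D ^ 2 * (a * l / (1 + t) - 2 * a / (1 + t) ^ 3 +
              b / 2 * (1 + t) * Real.exp (-(η * (t * (t + 2)) / 2)))
            - l * (1 + t) * u t) + l * (1 + t) * (y t - u t) ≤ 0 := by
        have h1 : y' ≤ -(l * (1 + t)) * y t + 2 * D ^ 2 / (1 + t) := hyle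
        have h2 : D ^ 2 * (2 / (1 + t)) = 2 * D ^ 2 / (1 + t) := by ring
        linarith [hD2, hy0term]
      calc Real.exp (l * (t * (t + 2)) / 2) * (l * (1 + t)) * (y t - u t) +
            Real.exp (l * (t * (t + 2)) / 2) *
              (y' - ((1 + t) / 2 * Real.exp (-(η * (t * (t + 2)) / 2)) * y0 +
                D ^ 2 * (a * l / (1 + t) - 2 * a / (1 + t) ^ 3 +
                  b / 2 * (1 + t) * Real.exp (-(η * (t * (t + 2)) / 2)))
                - l * (1 + t) * u t))
          = Real.exp (l * (t * (t + 2)) / 2) *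
              (y' - ((1 + t) / 2 * Real.exp (-(η * (t * (t + 2)) / 2)) * y0 +
                D ^ 2 * (a * l / (1 + t) - 2 * a / (1 + t) ^ 3 +
                  b / 2 * (1 + t) * Real.exp (-(η * (t * (t + 2)) / 2)))
                - l * (1 + t) * u t) + l * (1 + t) * (y t - u t)) := by ring
        _ ≤ 0 := mul_nonpos_of_nonneg_of_nonpos (Real.exp_pos _).le hinner
    have hdiffOn : DifferentiableOn ℝ F (interior (Ici (0:ℝ))) := fun s hs =>
      ((hFd s hs).choose_spec.2).differentiableAt.differentiableWithinAt
    have hnonpos : ∀ s ∈ interior (Ici (0:ℝ)), deriv F s ≤ 0 := by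
      intro s hs
      obtain ⟨F', hle, hF⟩ := hFd s hs
      rw [hF.deriv]
      exact hle
    intro t ht
    exact antitoneOn_of_deriv_nonpos (convex_Ici 0) hFc hdiffOn hnonpos
      self_mem_Ici ht ht
  -- conclude
  intro t ht
  have hFt := hFle t ht
  have hF0 : F 0 = y 0 - (y0 + D ^ 2 * (a + b)) := by
    rw [hFdef, hudef]
    norm_num
  have hF0le : F 0 ≤ 0 := by
    rw [hF0]
    nlinarith [mul_nonneg (sq_nonneg D) (by linarith : (0:ℝ) ≤ a + b)]
  have hFtval : F t = Real.exp (l * (t * (t + 2)) / 2) * (y t - u t) := by rw [hFdef]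
  have hexp : (0:ℝ) < Real.exp (l * (t * (t + 2)) / 2) := Real.exp_pos _
  have hytut : y t ≤ u t := by
    have hprod : Real.exp (l * (t * (t + 2)) / 2) * (y t - u t) ≤ 0 := by
      rw [← hFtval]; exact le_trans hFt hF0le
    by_contra hpos
    push_neg at hpos
    have hmul := mul_pos hexp (sub_pos.mpr hpos)
    linarith
  calc y t ≤ u t := hytut
    _ = Real.exp (-(η * (t * (t + 2)) / 2)) * y0 +
      D ^ 2 * (a / (1 + t) ^ 2 + b * Real.exp (-(η * (t * (t + 2)) / 2))) := by rw [hudef]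

set_option maxHeartbeats 1000000 in
theorem stmt_6 {H : Type*} [NormedAddCommGroup H] [InnerProductSpace ℝ H]
    [CompleteSpace H] (K : ℝ) (hK : 1 / 2 < K) (η : ℝ) (hη : η = 2 * K - 1) :
    ∃ C > (0:ℝ), ∀ (D : ℝ), 0 ≤ D → ∀ (X X' g d : ℝ → H),
      (∀ t ≥ (0:ℝ), HasDerivWithinAt X (X' t) (Set.Ici 0) t) →
      (∀ t ≥ (0:ℝ), X' t = -g t - (K * (1 + t)) • X t + d t) →
      (∀ t ≥ (0:ℝ), 0 ≤ inner (g t) (X t) (𝕜 := ℝ)) →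
      (∀ t ≥ (0:ℝ), ‖d t‖ ≤ D) →
      ∀ t ≥ (0:ℝ),
        ‖X t‖ ^ 2 ≤ Real.exp (-(η * t * (t + 2) / 2)) * ‖X 0‖ ^ 2 +
          C * D ^ 2 / (1 + t) ^ 2 := by
  have hη0 : 0 < η := by rw [hη]; linarith
  have hl0 : 0 < η + 1/2 := by linarith
  refine ⟨4 / (η + 1/2) + 32 * Real.exp 2 / (η + 1/2) * (1 + 2/η), by positivity, ?_⟩
  intro D hD X X' g d hX hX' hg hd
  have hXc : ContinuousOn X (Ici 0) := fun s hs => (hX s hs).continuousWithinAt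
  have hyc : ContinuousOn (fun t => ‖X t‖ ^ 2) (Ici 0) := (hXc.norm).pow 2
  have hy' : ∀ t > (0:ℝ), ∃ y', HasDerivAt (fun t => ‖X t‖ ^ 2) y' t ∧
      y' ≤ -((η + 1/2) * (1 + t)) * ‖X t‖ ^ 2 + 2 * D ^ 2 / (1 + t) := by
    intro t ht0
    have h1t : (0:ℝ) < 1 + t := by linarith
    have hXt : HasDerivAt X (X' t) t := (hX t ht0.le).hasDerivAt (Ici_mem_nhds ht0)
    refine ⟨inner ℝ (X t) (X' t) + inner ℝ (X' t) (X t), ?_, ?_⟩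
    · have h := hXt.inner ℝ hXt
      simpa only [real_inner_self_eq_norm_sq] using h
    · rw [hX' t ht0.le]
      have hp : (0:ℝ) ≤ inner (g t) (X t) (𝕜 := ℝ) := hg t ht0.le
      have hq : inner (d t) (X t) (𝕜 := ℝ) ≤ D * ‖X t‖ := by
        calc inner (d t) (X t) (𝕜 := ℝ) ≤ ‖d t‖ * ‖X t‖ := real_inner_le_norm _ _
          _ ≤ D * ‖X t‖ := mul_le_mul_of_nonneg_right (hd t ht0.le) (norm_nonneg _)
      have hAM : 2 * (D * ‖X t‖) ≤ (1 + t) / 2 * ‖X t‖ ^ 2 + 2 * D ^ 2 / (1 + t) := by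
        rw [← sub_nonneg]
        have key : (1 + t) / 2 * ‖X t‖ ^ 2 + 2 * D ^ 2 / (1 + t) - 2 * (D * ‖X t‖)
            = ((1 + t) * ‖X t‖ - 2 * D) ^ 2 / (2 * (1 + t)) := by
          field_simp
          ring
        rw [key]
        positivity
      have hexp1 : inner (X t) (-g t - (K * (1 + t)) • X t + d t) (𝕜 := ℝ)
          = -(inner (g t) (X t) (𝕜 := ℝ)) - K * (1 + t) * ‖X t‖ ^ 2
            + inner (d t) (X t) (𝕜 := ℝ) := by
        rw [inner_add_right, inner_sub_right, real_inner_smul_right,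
          real_inner_self_eq_norm_sq, inner_neg_right]
        rw [real_inner_comm (X t) (g t), real_inner_comm (X t) (d t)]
      have hexp2 : inner (-g t - (K * (1 + t)) • X t + d t) (X t) (𝕜 := ℝ)
          = -(inner (g t) (X t) (𝕜 := ℝ)) - K * (1 + t) * ‖X t‖ ^ 2
            + inner (d t) (X t) (𝕜 := ℝ) := by
        rw [inner_add_left, inner_sub_left, real_inner_smul_left,
          real_inner_self_eq_norm_sq, inner_neg_left]
      rw [hexp1, hexp2]
      have hcoef : ((η + 1/2) * (1 + t)) * ‖X t‖ ^ 2
          = 2 * (K * (1 + t) * ‖X t‖ ^ 2) - (1 + t) / 2 * ‖X t‖ ^ 2 := by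
        rw [hη]; ring
      linarith [hAM, hp, hq]
  have key := aux_comp η hη0 D (‖X 0‖ ^ 2) (by positivity) _ hyc le_rfl hy'
  intro t ht
  have h1t : (0:ℝ) < 1 + t := by linarith
  have hub := key t ht
  -- bound the exponential tail term by C / (1+t)^2
  have htt2 : (0:ℝ) ≤ t * (t + 2) := by nlinarith
  have hbE : (1 + t) ^ 2 * Real.exp (-(η * (t * (t + 2)) / 2)) ≤ 1 + 2/η := by
    have hx := Real.add_one_le_exp (η * (t * (t + 2)) / 2)
    have hpos : (0:ℝ) ≤ 1 + 2/η := by positivity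
    have h3 : (1 + 2/η) * (η * (t * (t + 2)) / 2 + 1)
        ≤ (1 + 2/η) * Real.exp (η * (t * (t + 2)) / 2) :=
      mul_le_mul_of_nonneg_left hx hpos
    have hexpand : (1 + 2/η) * (η * (t * (t + 2)) / 2 + 1)
        = (1 + t) ^ 2 + 2/η + η * (t * (t + 2)) / 2 := by
      field_simp
      ring
    have h2 : (1 + t) ^ 2 ≤ (1 + 2/η) * Real.exp (η * (t * (t + 2)) / 2) := by
      have h2η : (0:ℝ) ≤ 2/η := by positivity
      nlinarith [h3, hexpand]
    have hEp : (0:ℝ) < Real.exp (η * (t * (t + 2)) / 2) := Real.exp_pos _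
    calc (1 + t) ^ 2 * Real.exp (-(η * (t * (t + 2)) / 2))
        = (1 + t) ^ 2 / Real.exp (η * (t * (t + 2)) / 2) := by
          rw [Real.exp_neg]; ring
      _ ≤ 1 + 2/η := by
          rw [div_le_iff₀ hEp]
          nlinarith [h2]
  have hE5 : Real.exp (-(η * (t * (t + 2)) / 2)) ≤ (1 + 2/η) / (1 + t) ^ 2 := by
    rw [le_div_iff₀ (by positivity : (0:ℝ) < (1 + t) ^ 2)]
    nlinarith [hbE]
  have hB : (0:ℝ) < 32 * Real.exp 2 / (η + 1/2) := by positivity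
  have h6 : 32 * Real.exp 2 / (η + 1/2) * Real.exp (-(η * (t * (t + 2)) / 2))
      ≤ 32 * Real.exp 2 / (η + 1/2) * ((1 + 2/η) / (1 + t) ^ 2) :=
    mul_le_mul_of_nonneg_left hE5 hB.le
  have hfin : D ^ 2 * (4 / (η + 1/2) / (1 + t) ^ 2 +
        32 * Real.exp 2 / (η + 1/2) * Real.exp (-(η * (t * (t + 2)) / 2)))
      ≤ (4 / (η + 1/2) + 32 * Real.exp 2 / (η + 1/2) * (1 + 2/η)) * D ^ 2 / (1 + t) ^ 2 := by
    calc D ^ 2 * (4 / (η + 1/2) / (1 + t) ^ 2 +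
          32 * Real.exp 2 / (η + 1/2) * Real.exp (-(η * (t * (t + 2)) / 2)))
        ≤ D ^ 2 * (4 / (η + 1/2) / (1 + t) ^ 2 +
          32 * Real.exp 2 / (η + 1/2) * ((1 + 2/η) / (1 + t) ^ 2)) :=
          mul_le_mul_of_nonneg_left (by linarith) (sq_nonneg D)
      _ = (4 / (η + 1/2) + 32 * Real.exp 2 / (η + 1/2) * (1 + 2/η)) * D ^ 2 / (1 + t) ^ 2 := by
          field_simp
  have hexpeq : Real.exp (-(η * t * (t + 2) / 2)) = Real.exp (-(η * (t * (t + 2)) / 2)) := by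
    ring_nf
  rw [hexpeq]
  linarith [hub, hfin]
end

section
/- Let H be a real Hilbert space, B : H → H a continuous linear operator, β > 0 with ⟨B x, x⟩ ≥ β ‖x‖² for all x ∈ H, K > 0 with K β > 1/2, and set η := 2 K β − 1. Let X : ℝ → H be differentiable on [0, ∞), and let g, d : ℝ → H be such that for all t ≥ 0: X′(t) = −g(t) − K (1 + t) B(X(t)) + d(t), ⟨g(t), X(t)⟩ ≥ 0, and ‖d(t)‖ ≤ D for a constant D ≥ 0. Then there exists a constant C > 0, depending only on η, such that for all t ≥ 0: ‖X(t)‖² ≤ e^{−η t (t + 2) / 2} ‖X(0)‖² + C · D² / (1 + t)². -/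
open Real Set

set_option maxHeartbeats 1000000 in
theorem stmt_7 {H : Type*} [NormedAddCommGroup H] [InnerProductSpace ℝ H]
    [CompleteSpace H] (B : H →L[ℝ] H) (β : ℝ) (hβ : 0 < β)
    (hB : ∀ x : H, β * ‖x‖ ^ 2 ≤ inner (B x) x (𝕜 := ℝ))
    (K : ℝ) (hK0 : 0 < K) (hKβ : 1 / 2 < K * β)
    (η : ℝ) (hη : η = 2 * K * β - 1) :
    ∃ C > (0:ℝ), ∀ (D : ℝ), 0 ≤ D → ∀ (X X' g d : ℝ → H),
      (∀ t ≥ (0:ℝ), HasDerivWithinAt X (X' t) (Set.Ici 0) t) →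
      (∀ t ≥ (0:ℝ), X' t = -g t - (K * (1 + t)) • B (X t) + d t) →
      (∀ t ≥ (0:ℝ), 0 ≤ inner (g t) (X t) (𝕜 := ℝ)) →
      (∀ t ≥ (0:ℝ), ‖d t‖ ≤ D) →
      ∀ t ≥ (0:ℝ),
        ‖X t‖ ^ 2 ≤ Real.exp (-(η * t * (t + 2) / 2)) * ‖X 0‖ ^ 2 +
          C * D ^ 2 / (1 + t) ^ 2 := by
  have hη0 : 0 < η := by rw [hη]; linarith
  set a : ℝ := 2/η with ha
  set b : ℝ := 4/η^2 with hb
  set M : ℝ := 2*Real.exp (η/2)/η with hM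
  have ha0 : 0 < a := by rw [ha]; exact div_pos two_pos hη0
  have hb0 : 0 < b := by rw [hb]; exact div_pos (by norm_num) (pow_pos hη0 2)
  have hM0 : 0 < M := by rw [hM]; exact div_pos (mul_pos two_pos (Real.exp_pos _)) hη0
  refine ⟨b*M + a, by nlinarith, ?_⟩
  intro D hD X X' g d hX hX' hgX hd
  -- derivative of ‖X‖²
  have hφ : ∀ s ∈ Ici (0:ℝ), HasDerivWithinAt (fun τ => ‖X τ‖^2)
      (2 * inner (X' s) (X s) (𝕜 := ℝ)) (Ici 0) s := by
    intro s hs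
    have h := (hX s hs).inner ℝ (hX s hs)
    simp only [real_inner_self_eq_norm_sq] at h
    refine h.congr_deriv ?_
    rw [real_inner_comm (X' s) (X s)]; ring
  -- key differential inequality
  have hkey : ∀ s : ℝ, 0 ≤ s →
      2 * inner (X' s) (X s) (𝕜 := ℝ) ≤ -(η*(1+s)) * ‖X s‖^2 + D^2/(1+s) := by
    intro s hs
    have hs1 : (0:ℝ) < 1 + s := by linarith
    have e1 : inner (X' s) (X s) (𝕜 := ℝ)
        = -(inner (g s) (X s) (𝕜 := ℝ)) - (K*(1+s)) * inner (B (X s)) (X s) (𝕜 := ℝ)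
          + inner (d s) (X s) (𝕜 := ℝ) := by
      rw [hX' s hs]
      simp [inner_add_left, inner_sub_left, inner_neg_left, real_inner_smul_left]
    have h1 := hgX s hs
    have h2 := hB (X s)
    have h3 : inner (d s) (X s) (𝕜 := ℝ) ≤ D * ‖X s‖ :=
      le_trans (real_inner_le_norm _ _) (mul_le_mul_of_nonneg_right (hd s hs) (norm_nonneg _))
    have h4 : 2*D*‖X s‖ ≤ (1+s)*‖X s‖^2 + D^2/(1+s) := by
      have h5 : (0:ℝ) ≤ ((1+s)*‖X s‖ - D)^2 / (1+s) := by positivity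
      have h6 : (1+s)*‖X s‖^2 + D^2/(1+s) - 2*D*‖X s‖ = ((1+s)*‖X s‖ - D)^2 / (1+s) := by
        field_simp; ring
      linarith [h6 ▸ h5]
    have h7 : K*(1+s)*(β*‖X s‖^2) ≤ K*(1+s) * inner (B (X s)) (X s) (𝕜 := ℝ) :=
      mul_le_mul_of_nonneg_left h2 (by positivity)
    rw [e1, hη]
    nlinarith [h1, h3, h4, h7]
  -- derivative of the comparison function Z
  have hZderiv : ∀ s ∈ Ici (0:ℝ), HasDerivWithinAt
      (fun x => (‖X 0‖^2 + b*D^2)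
        + D^2 * (Real.exp (η*x*(x+2)/2) * (a/(1+x)^2 - b/(1+x)^4))
        - Real.exp (η*x*(x+2)/2) * ‖X x‖^2)
      (Real.exp (η*s*(s+2)/2) *
        (η*(1+s)*(D^2*(a/(1+s)^2 - b/(1+s)^4) - ‖X s‖^2)
          + D^2*(-2*a/(1+s)^3 + 4*b/(1+s)^5)
          - 2 * inner (X' s) (X s) (𝕜 := ℝ))) (Ici 0) s := by
    intro s hs
    have hs1 : (0:ℝ) < 1 + s := by simpa using lt_of_lt_of_le zero_lt_one (by simpa using hs)
    have hne : (1:ℝ) + s ≠ 0 := ne_of_gt hs1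
    have hP : HasDerivAt (fun x : ℝ => η*x*(x+2)/2) (η*(1+s)) s := by
      have h := (((hasDerivAt_id s).const_mul η).mul ((hasDerivAt_id s).add_const 2)).div_const 2
      refine h.congr_deriv ?_
      simp; ring
    have hE : HasDerivAt (fun x : ℝ => Real.exp (η*x*(x+2)/2))
        (Real.exp (η*s*(s+2)/2) * (η*(1+s))) s := hP.exp
    have hG : HasDerivAt (fun x : ℝ => a/(1+x)^2 - b/(1+x)^4)
        (-2*a/(1+s)^3 + 4*b/(1+s)^5) s := by
      have h := ((hasDerivAt_const s a).div (((hasDerivAt_id s).const_add 1).pow 2)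
          (pow_ne_zero 2 hne)).sub
        ((hasDerivAt_const s b).div (((hasDerivAt_id s).const_add 1).pow 4)
          (pow_ne_zero 4 hne))
      refine h.congr_deriv ?_
      simp only [Pi.pow_apply, id]
      field_simp
      ring
    have hmain := (((hE.mul hG).const_mul (D^2)).const_add (‖X 0‖^2 + b*D^2)).hasDerivWithinAt.sub
      (hE.hasDerivWithinAt.mul (hφ s hs))
    refine hmain.congr_deriv ?_
    ring
  -- nonnegativity of the derivative of Z
  have hZnn : ∀ s : ℝ, 0 ≤ s → 0 ≤ Real.exp (η*s*(s+2)/2) *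
        (η*(1+s)*(D^2*(a/(1+s)^2 - b/(1+s)^4) - ‖X s‖^2)
          + D^2*(-2*a/(1+s)^3 + 4*b/(1+s)^5)
          - 2 * inner (X' s) (X s) (𝕜 := ℝ)) := by
    intro s hs
    have hs1 : (0:ℝ) < 1 + s := by linarith
    have hq : η*(1+s)*(a/(1+s)^2 - b/(1+s)^4) + (-2*a/(1+s)^3 + 4*b/(1+s)^5) - 1/(1+s)
        = (1 - 4/(η*(1+s)^2))^2/(1+s) := by
      rw [ha, hb]; field_simp; ring
    have h8 : (0:ℝ) ≤ D^2 * ((1 - 4/(η*(1+s)^2))^2/(1+s)) := by positivity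
    have h9 := hkey s hs
    have h10 : D^2*(η*(1+s)*(a/(1+s)^2 - b/(1+s)^4) + (-2*a/(1+s)^3 + 4*b/(1+s)^5) - 1/(1+s))
        = D^2*((1 - 4/(η*(1+s)^2))^2/(1+s)) := by rw [hq]
    apply mul_nonneg (Real.exp_pos _).le
    have hT : η*(1+s)*(D^2*(a/(1+s)^2 - b/(1+s)^4) - ‖X s‖^2)
          + D^2*(-2*a/(1+s)^3 + 4*b/(1+s)^5) - 2 * inner (X' s) (X s) (𝕜 := ℝ)
        = D^2*((1 - 4/(η*(1+s)^2))^2/(1+s))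
          + (-(η*(1+s)) * ‖X s‖^2 + D^2/(1+s) - 2 * inner (X' s) (X s) (𝕜 := ℝ)) := by
      rw [← h10]; ring
    rw [hT]
    linarith [h8, h9]
  -- Z is monotone on [0,∞)
  have hmono : MonotoneOn
      (fun x => (‖X 0‖^2 + b*D^2)
        + D^2 * (Real.exp (η*x*(x+2)/2) * (a/(1+x)^2 - b/(1+x)^4))
        - Real.exp (η*x*(x+2)/2) * ‖X x‖^2) (Ici 0) := by
    apply monotoneOn_of_deriv_nonneg (convex_Ici 0)
    · exact fun s hs => ((hZderiv s hs).continuousWithinAt)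
    · intro s hs
      rw [interior_Ici] at hs
      exact ((hZderiv s (mem_Ici.mpr (le_of_lt hs))).hasDerivAt (Ici_mem_nhds hs)).differentiableAt.differentiableWithinAt
    · intro s hs
      rw [interior_Ici] at hs
      rw [((hZderiv s (mem_Ici.mpr (le_of_lt hs))).hasDerivAt (Ici_mem_nhds hs)).deriv]
      exact hZnn s (le_of_lt hs)
  intro t ht
  have hmt := hmono (self_mem_Ici (a := (0:ℝ))) (mem_Ici.mpr ht) ht
  simp only at hmt
  have hZ0 : (‖X 0‖^2 + b*D^2)
        + D^2 * (Real.exp (η*0*(0+2)/2) * (a/(1+(0:ℝ))^2 - b/(1+(0:ℝ))^4))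
        - Real.exp (η*0*(0+2)/2) * ‖X 0‖^2 = a * D^2 := by
    norm_num
    ring
  have hZt : 0 ≤ (‖X 0‖^2 + b*D^2)
        + D^2 * (Real.exp (η*t*(t+2)/2) * (a/(1+t)^2 - b/(1+t)^4))
        - Real.exp (η*t*(t+2)/2) * ‖X t‖^2 := by
    have : a * D^2 ≤ (‖X 0‖^2 + b*D^2)
        + D^2 * (Real.exp (η*t*(t+2)/2) * (a/(1+t)^2 - b/(1+t)^4))
        - Real.exp (η*t*(t+2)/2) * ‖X t‖^2 := hZ0 ▸ hmt
    linarith [this, mul_nonneg ha0.le (sq_nonneg D)]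
  -- final assembly
  have ht1 : (0:ℝ) < 1 + t := by linarith
  have hFt0 : (0:ℝ) < Real.exp (η*t*(t+2)/2) := Real.exp_pos _
  have hMF : (1+t)^2 ≤ M * Real.exp (η*t*(t+2)/2) := by
    have h1 : η*(1+t)^2/2 ≤ Real.exp (η*(1+t)^2/2) := by
      linarith [Real.add_one_le_exp (η*(1+t)^2/2)]
    have h2 : M * Real.exp (η*t*(t+2)/2) = (2/η) * Real.exp (η*(1+t)^2/2) := by
      rw [hM]
      rw [show (2:ℝ)*Real.exp (η/2)/η * Real.exp (η*t*(t+2)/2)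
          = (2/η) * (Real.exp (η/2) * Real.exp (η*t*(t+2)/2)) by ring]
      rw [← Real.exp_add]
      congr 2
      ring
    rw [h2]
    have h4 := mul_le_mul_of_nonneg_left h1 (le_of_lt (div_pos two_pos hη0))
    have h5 : (2/η) * (η*(1+t)^2/2) = (1+t)^2 := by field_simp
    linarith [h5 ▸ h4]
  have hbD : (0:ℝ) ≤ b*D^2 := by positivity
  have hMF2 : b*D^2 ≤ b*M*D^2*Real.exp (η*t*(t+2)/2)/(1+t)^2 := by
    rw [le_div_iff₀ (by positivity)]
    nlinarith [hMF, hbD]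
  have hb4 : (0:ℝ) ≤ D^2*(Real.exp (η*t*(t+2)/2)*(b/(1+t)^4)) :=
    mul_nonneg (sq_nonneg D) (mul_nonneg (Real.exp_pos _).le
      (div_nonneg hb0.le (by positivity)))
  have hEe : Real.exp (η*t*(t+2)/2) * Real.exp (-(η * t * (t + 2) / 2)) = 1 := by
    rw [← Real.exp_add]; simp
  have h11 : Real.exp (η*t*(t+2)/2) * (Real.exp (-(η * t * (t + 2) / 2)) * ‖X 0‖^2)
      = ‖X 0‖^2 := by rw [← mul_assoc, hEe, one_mul]
  rw [← mul_le_mul_iff_right₀ hFt0]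
  have hexpand : rexp (η*t*(t+2)/2) * (rexp (-(η * t * (t + 2) / 2)) * ‖X 0‖ ^ 2
        + (b*M + a) * D ^ 2 / (1 + t) ^ 2)
      = ‖X 0‖^2 + b*M*D^2*rexp (η*t*(t+2)/2)/(1+t)^2
        + a*D^2*rexp (η*t*(t+2)/2)/(1+t)^2 := by
    rw [show rexp (η*t*(t+2)/2) * (rexp (-(η * t * (t + 2) / 2)) * ‖X 0‖ ^ 2
          + (b*M + a) * D ^ 2 / (1 + t) ^ 2)
        = (rexp (η*t*(t+2)/2) * rexp (-(η * t * (t + 2) / 2))) * ‖X 0‖ ^ 2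
          + (b*M*D^2*rexp (η*t*(t+2)/2)/(1+t)^2
            + a*D^2*rexp (η*t*(t+2)/2)/(1+t)^2) by ring]
    rw [hEe, one_mul]
    ring
  rw [hexpand]
  have hsplit : D^2 * (rexp (η*t*(t+2)/2) * (a/(1+t)^2 - b/(1+t)^4))
      = a*D^2*rexp (η*t*(t+2)/2)/(1+t)^2
        - D^2*(rexp (η*t*(t+2)/2)*(b/(1+t)^4)) := by ring
  linarith [hZt, hb4, hMF2, hsplit]
end

section
/- Let H be a real Hilbert space, B : H → H a continuous linear operator, β > 0 with ⟨B x, x⟩ ≥ β ‖x‖² for all x ∈ H, K > 0, and set η := 2 K β − 1. Let X : ℝ → H be differentiable, and let g, d : ℝ → H satisfy for all t ≥ 0: X′(t) = −g(t) − K (1 + t) B(X(t)) + d(t) and ⟨g(t), X(t)⟩ ≥ 0. Then the function V(t) := ‖X(t)‖² is differentiable on [0, ∞) and satisfies, for all t ≥ 0: V′(t) ≤ −η (1 + t) V(t) + ‖d(t)‖² / (1 + t). -/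
open Real Set

theorem stmt_8 {H : Type*} [NormedAddCommGroup H] [InnerProductSpace ℝ H]
    [CompleteSpace H] (B : H →L[ℝ] H) (β : ℝ) (hβ : 0 < β)
    (hB : ∀ x : H, β * ‖x‖ ^ 2 ≤ inner (B x) x (𝕜 := ℝ))
    (K : ℝ) (hK0 : 0 < K) (η : ℝ) (hη : η = 2 * K * β - 1)
    (X X' g d : ℝ → H)
    (hX : ∀ t : ℝ, HasDerivAt X (X' t) t)
    (heq : ∀ t ≥ (0:ℝ), X' t = -g t - (K * (1 + t)) • B (X t) + d t)
    (hg : ∀ t ≥ (0:ℝ), 0 ≤ inner (g t) (X t) (𝕜 := ℝ)) :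
    ∃ V' : ℝ → ℝ, ∀ t ≥ (0:ℝ),
      HasDerivAt (fun t => ‖X t‖ ^ 2) (V' t) t ∧
      V' t ≤ -η * (1 + t) * ‖X t‖ ^ 2 + ‖d t‖ ^ 2 / (1 + t) := by
  refine ⟨fun t => 2 * inner (X' t) (X t) (𝕜 := ℝ), fun t ht => ?_⟩
  have ht1 : (0:ℝ) < 1 + t := by linarith
  constructor
  · have h := (hX t).inner ℝ (hX t)
    have : (fun s => ‖X s‖ ^ 2) = fun s => inner (X s) (X s) (𝕜 := ℝ) := by
      funext s; rw [real_inner_self_eq_norm_sq]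
    rw [this]
    convert h using 1
    · rfl
    · rfl
    linarith [real_inner_comm (X t) (X' t)]
  · have key : inner (X' t) (X t) (𝕜 := ℝ)
        = -inner (g t) (X t) (𝕜 := ℝ) - K * (1 + t) * inner (B (X t)) (X t) (𝕜 := ℝ)
          + inner (d t) (X t) (𝕜 := ℝ) := by
      rw [heq t ht]
      simp [inner_add_left, inner_sub_left, inner_neg_left, real_inner_smul_left]
    have hBX := hB (X t)
    have hgt := hg t ht
    have young : 2 * inner (d t) (X t) (𝕜 := ℝ)
        ≤ (1 + t) * ‖X t‖ ^ 2 + ‖d t‖ ^ 2 / (1 + t) := by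
      have h1 : inner (d t) (X t) (𝕜 := ℝ) ≤ ‖d t‖ * ‖X t‖ := real_inner_le_norm _ _
      have h2 : 2 * (1 + t) * (‖d t‖ * ‖X t‖) ≤ (1 + t) ^ 2 * ‖X t‖ ^ 2 + ‖d t‖ ^ 2 := by
        nlinarith [sq_nonneg ((1 + t) * ‖X t‖ - ‖d t‖)]
      have hdiv : ‖d t‖ ^ 2 / (1 + t) = ‖d t‖ ^ 2 * (1 + t)⁻¹ := div_eq_mul_inv _ _
      have hinv : (1 + t) * (1 + t)⁻¹ = 1 := mul_inv_cancel₀ ht1.ne'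
      have hinvnn : (0:ℝ) ≤ (1 + t)⁻¹ := inv_nonneg.mpr ht1.le
      rw [hdiv]
      nlinarith [mul_le_mul_of_nonneg_right h2 hinvnn, h1, sq_nonneg (‖X t‖)]
    have young' : 2 * inner (d t) (X t) (𝕜 := ℝ)
        ≤ (1 + t) * ‖X t‖ ^ 2 + ‖d t‖ ^ 2 / (1 + t) := young
    show 2 * inner (X' t) (X t) (𝕜 := ℝ) ≤ _
    rw [key, hη]
    have hK1 : 0 < K * (1 + t) := mul_pos hK0 ht1
    nlinarith [mul_le_mul_of_nonneg_left hBX hK1.le]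
end

section
/- Let H be a real Hilbert space and let S : ℝ → (H →L H) satisfy: S(0) = id; S(t + s) = S(t) ∘ S(s) for all t, s ≥ 0; for every x ∈ H the map t ↦ S(t) x is continuous on [0, ∞); and ‖S(t) x‖ ≤ ‖x‖ for all t ≥ 0 and x ∈ H. Let f : ℝ → ℝ be measurable and bounded on every compact subinterval of [0, ∞), and let d : ℝ → H be Bochner integrable on every compact subinterval of [0, ∞). Then for every X₀ ∈ H and every T > 0 there exists a unique continuous function X : [0, T] → H such that for all t ∈ [0, T]: X(t) = S(t) X₀ + ∫₀^{t} S(t − s)(f(s) • X(s) + d(s)) ds. -/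
open Real MeasureTheory intervalIntegral Set

section Helpers

variable {H : Type*} [NormedAddCommGroup H] [InnerProductSpace ℝ H] [CompleteSpace H]

lemma sgHelper_cont (S : ℝ → H →L[ℝ] H)
    (hScont : ∀ x : H, ContinuousOn (fun t => S t x) (Set.Ici 0))
    (hScontr : ∀ t ≥ (0:ℝ), ∀ x : H, ‖S t x‖ ≤ ‖x‖) :
    Continuous (fun p : ℝ × H => S (max p.1 0) p.2) := by
  rw [continuous_iff_continuousAt]
  rintro ⟨τ₀, x₀⟩
  have h1 : Filter.Tendsto (fun p : ℝ × H => S (max p.1 0) (p.2 - x₀))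
      (nhds (τ₀, x₀)) (nhds 0) := by
    apply squeeze_zero_norm (fun p => hScontr _ (le_max_right _ _) _)
    have h : Filter.Tendsto (fun p : ℝ × H => p.2 - x₀) (nhds (τ₀, x₀)) (nhds (x₀ - x₀)) :=
      (continuous_snd.sub continuous_const).tendsto _
    rw [sub_self] at h
    simpa using h.norm
  have h2 : Filter.Tendsto (fun p : ℝ × H => S (max p.1 0) x₀) (nhds (τ₀, x₀))
      (nhds (S (max τ₀ 0) x₀)) := by
    have hc : Continuous (fun τ : ℝ => S (max τ 0) x₀) :=
      (hScont x₀).comp_continuous (continuous_id.max continuous_const)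
        (fun τ => Set.mem_Ici.2 (le_max_right _ _))
    exact (hc.comp continuous_fst).tendsto _
  have key := h1.add h2
  rw [zero_add] at key
  have heq : (fun p : ℝ × H => S (max p.1 0) p.2)
      = fun p : ℝ × H => S (max p.1 0) (p.2 - x₀) + S (max p.1 0) x₀ := by
    funext p
    rw [← map_add]
    norm_num
  unfold ContinuousAt
  rw [heq]
  simpa using key

lemma sgHelper_meas (S : ℝ → H →L[ℝ] H)
    (hSc : Continuous (fun p : ℝ × H => S (max p.1 0) p.2))
    {g : ℝ → H} {μ : Measure ℝ} (hg : AEStronglyMeasurable g μ) (t : ℝ) :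
    AEStronglyMeasurable (fun s => S (max (t - s) 0) (g s)) μ :=
  hSc.comp_aestronglyMeasurable
    (((continuous_const.sub continuous_id).aestronglyMeasurable).prodMk hg)

lemma sgHelper_intg (S : ℝ → H →L[ℝ] H)
    (hSc : Continuous (fun p : ℝ × H => S (max p.1 0) p.2))
    (hScontr : ∀ t ≥ (0:ℝ), ∀ x : H, ‖S t x‖ ≤ ‖x‖)
    {g : ℝ → H} {μ : Measure ℝ} (hg : Integrable g μ) (t : ℝ) :
    Integrable (fun s => S (max (t - s) 0) (g s)) μ :=
  hg.norm.mono' (sgHelper_meas S hSc hg.aestronglyMeasurable t)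
    (Filter.Eventually.of_forall fun s => hScontr _ (le_max_right _ _) _)

lemma sgHelper_contOn (S : ℝ → H →L[ℝ] H)
    (hSc : Continuous (fun p : ℝ × H => S (max p.1 0) p.2))
    (hScontr : ∀ t ≥ (0:ℝ), ∀ x : H, ‖S t x‖ ≤ ‖x‖)
    {g : ℝ → H} {T : ℝ} (hT : 0 ≤ T) (hg : IntegrableOn g (Set.Ioc 0 T)) :
    ContinuousOn (fun t => ∫ s in (0:ℝ)..t, S (max (t - s) 0) (g s)) (Set.Icc 0 T) := by
  intro t₀ ht₀
  have hrepr : ∀ t ∈ Set.Icc (0:ℝ) T,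
      (∫ s in (0:ℝ)..t, S (max (t - s) 0) (g s))
        = ∫ s in Set.Ioc (0:ℝ) T,
            (Set.Ioc (0:ℝ) t).indicator (fun u => S (max (t - u) 0) (g u)) s := by
    intro t ht
    rw [intervalIntegral.integral_of_le ht.1,
      MeasureTheory.setIntegral_indicator measurableSet_Ioc]
    congr 1
    rw [Set.Ioc_inter_Ioc, max_self, min_eq_right ht.2]
  have key : ContinuousWithinAt (fun t => ∫ s in Set.Ioc (0:ℝ) T,
      (Set.Ioc (0:ℝ) t).indicator (fun u => S (max (t - u) 0) (g u)) s)
      (Set.Icc 0 T) t₀ := by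
    apply MeasureTheory.continuousWithinAt_of_dominated (bound := fun s => ‖g s‖)
    · exact Filter.Eventually.of_forall fun t =>
        ((sgHelper_meas S hSc hg.aestronglyMeasurable t).indicator measurableSet_Ioc)
    · refine Filter.Eventually.of_forall fun t => Filter.Eventually.of_forall fun s => ?_
      by_cases hs : s ∈ Set.Ioc (0:ℝ) t
      · rw [Set.indicator_of_mem hs]
        exact hScontr _ (le_max_right _ _) _
      · rw [Set.indicator_of_notMem hs]
        simp
    · exact hg.norm
    · have hne : ∀ᵐ s ∂((volume : Measure ℝ).restrict (Set.Ioc (0:ℝ) T)), s ≠ t₀ := by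
        refine MeasureTheory.ae_restrict_of_ae ?_
        rw [MeasureTheory.ae_iff]
        have h0 : {a : ℝ | ¬a ≠ t₀} = {t₀} := by
          ext a; simp
        rw [h0]
        exact measure_singleton t₀
      filter_upwards [hne, MeasureTheory.ae_restrict_mem measurableSet_Ioc] with s hs hsmem
      rcases lt_or_gt_of_ne hs with h | h
      · have hca : ContinuousAt (fun t : ℝ => S (max (t - s) 0) (g s)) t₀ := by
          have hct : Continuous (fun t : ℝ => ((t - s, g s) : ℝ × H)) :=
            (continuous_id.sub continuous_const).prodMk continuous_const
          exact (hSc.comp hct).continuousAt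
        have hev : (fun t : ℝ => S (max (t - s) 0) (g s)) =ᶠ[nhds t₀]
            fun t => (Set.Ioc (0:ℝ) t).indicator (fun u => S (max (t - u) 0) (g u)) s := by
          filter_upwards [Ioi_mem_nhds h] with t ht
          have hmem : s ∈ Set.Ioc (0:ℝ) t := ⟨hsmem.1, le_of_lt ht⟩
          rw [Set.indicator_of_mem hmem]
        exact (hca.congr hev).continuousWithinAt
      · have hev : (fun _ : ℝ => (0:H)) =ᶠ[nhds t₀]
            fun t => (Set.Ioc (0:ℝ) t).indicator (fun u => S (max (t - u) 0) (g u)) s := by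
          filter_upwards [Iio_mem_nhds h] with t ht
          rw [Set.indicator_of_notMem (fun hsm => absurd hsm.2 (not_le.2 ht))]
        exact (continuousAt_const.congr hev).continuousWithinAt
  exact key.congr hrepr (hrepr t₀ ht₀)

end Helpers

theorem stmt_11 {H : Type*} [NormedAddCommGroup H] [InnerProductSpace ℝ H]
    [CompleteSpace H] (S : ℝ → H →L[ℝ] H)
    (hS0 : S 0 = ContinuousLinearMap.id ℝ H)
    (hSadd : ∀ t ≥ (0:ℝ), ∀ s ≥ (0:ℝ), S (t + s) = (S t).comp (S s))
    (hScont : ∀ x : H, ContinuousOn (fun t => S t x) (Set.Ici 0))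
    (hScontr : ∀ t ≥ (0:ℝ), ∀ x : H, ‖S t x‖ ≤ ‖x‖)
    (f : ℝ → ℝ) (hfmeas : Measurable f)
    (hfbdd : ∀ b ≥ (0:ℝ), ∃ M : ℝ, ∀ s ∈ Set.Icc (0:ℝ) b, |f s| ≤ M)
    (d : ℝ → H)
    (hd : ∀ b ≥ (0:ℝ), MeasureTheory.IntegrableOn d (Set.Icc 0 b)) :
    ∀ (X₀ : H) (T : ℝ), 0 < T →
      ∃ X : ℝ → H,
        (ContinuousOn X (Set.Icc 0 T) ∧
          ∀ t ∈ Set.Icc (0:ℝ) T,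
            X t = S t X₀ + ∫ s in (0:ℝ)..t, S (t - s) (f s • X s + d s)) ∧
        ∀ Y : ℝ → H,
          (ContinuousOn Y (Set.Icc 0 T) ∧
            ∀ t ∈ Set.Icc (0:ℝ) T,
              Y t = S t X₀ + ∫ s in (0:ℝ)..t, S (t - s) (f s • Y s + d s)) →
          ∀ t ∈ Set.Icc (0:ℝ) T, Y t = X t := by
  classical
  intro X₀ T hT
  have hT' : (0:ℝ) ≤ T := hT.le
  obtain ⟨M₀, hM₀⟩ := hfbdd T hT'
  set M : ℝ := max M₀ 0 with hMdef
  have hM0 : (0:ℝ) ≤ M := le_max_right _ _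
  have hMf : ∀ s ∈ Set.Icc (0:ℝ) T, |f s| ≤ M :=
    fun s hs => le_trans (hM₀ s hs) (le_max_left _ _)
  have hSc : Continuous (fun p : ℝ × H => S (max p.1 0) p.2) := sgHelper_cont S hScont hScontr
  have hdT : MeasureTheory.IntegrableOn d (Set.Ioc 0 T) :=
    (hd T hT').mono_set Set.Ioc_subset_Icc_self
  have instNE : Nonempty C(↥(Set.Icc (0:ℝ) T), H) := ⟨ContinuousMap.const _ 0⟩
  -- extension operator
  let E : C(↥(Set.Icc (0:ℝ) T), H) → ℝ → H := fun X => Set.IccExtend hT' X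
  have hEcont : ∀ X, Continuous (E X) := fun X => X.continuous.comp continuous_projIcc
  have hEbd : ∀ X s, ‖E X s‖ ≤ ‖X‖ := fun X s => X.norm_coe_le_norm _
  have hEmem : ∀ (X : C(↥(Set.Icc (0:ℝ) T), H)) t (ht : t ∈ Set.Icc (0:ℝ) T),
      E X t = X ⟨t, ht⟩ := fun X t ht => Set.IccExtend_of_mem hT' X ht
  -- forcing is integrable
  have hgint : ∀ X : C(↥(Set.Icc (0:ℝ) T), H),
      MeasureTheory.IntegrableOn (fun s => f s • E X s + d s) (Set.Ioc 0 T) := by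
    intro X
    refine MeasureTheory.Integrable.add ?_ hdT
    refine MeasureTheory.Integrable.mono' (g := fun _ => M * ‖X‖)
      (MeasureTheory.integrableOn_const measure_Ioc_lt_top.ne) ?_ ?_
    · exact (hfmeas.aestronglyMeasurable.restrict).smul ((hEcont X).aestronglyMeasurable.restrict)
    · filter_upwards [MeasureTheory.ae_restrict_mem measurableSet_Ioc] with s hs
      rw [norm_smul, Real.norm_eq_abs]
      exact mul_le_mul (hMf s ⟨hs.1.le, hs.2⟩) (hEbd X s) (norm_nonneg _) hM0
  -- the Picard operator
  let P : C(↥(Set.Icc (0:ℝ) T), H) → ℝ → H := fun X t =>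
    S t X₀ + ∫ s in (0:ℝ)..t, S (max (t - s) 0) (f s • E X s + d s)
  have hPcont : ∀ X, ContinuousOn (P X) (Set.Icc 0 T) := fun X =>
    ((hScont X₀).mono Set.Icc_subset_Ici_self).add
      (sgHelper_contOn S hSc hScontr hT' (hgint X))
  let Φ : C(↥(Set.Icc (0:ℝ) T), H) → C(↥(Set.Icc (0:ℝ) T), H) := fun X =>
    ⟨Set.restrict _ (P X), (hPcont X).restrict⟩
  have hΦapp : ∀ X u, Φ X u = P X u.1 := fun X u => rfl
  have hPapp : ∀ X t, P X t
      = S t X₀ + ∫ s in (0:ℝ)..t, S (max (t - s) 0) (f s • E X s + d s) := fun X t => rfl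
  -- interval integrability
  have hii : ∀ (X : C(↥(Set.Icc (0:ℝ) T), H)) {t : ℝ}, t ∈ Set.Icc (0:ℝ) T →
      IntervalIntegrable (fun s => S (max (t - s) 0) (f s • E X s + d s)) volume 0 t := by
    intro X t ht
    rw [intervalIntegrable_iff_integrableOn_Ioc_of_le ht.1]
    exact sgHelper_intg S hSc hScontr
      ((hgint X).mono_set (Set.Ioc_subset_Ioc_right ht.2)) t
  -- key contraction estimate
  have key : ∀ n : ℕ, ∀ X Y : C(↥(Set.Icc (0:ℝ) T), H), ∀ t ∈ Set.Icc (0:ℝ) T,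
      ‖E (Φ^[n] X) t - E (Φ^[n] Y) t‖ ≤ M ^ n * t ^ n / n.factorial * dist X Y := by
    intro n
    induction n with
    | zero =>
      intro X Y t ht
      simp only [Function.iterate_zero, id_eq, pow_zero, Nat.factorial_zero, Nat.cast_one,
        mul_one, one_mul, div_one]
      rw [hEmem X t ht, hEmem Y t ht, ← dist_eq_norm]
      exact ContinuousMap.dist_apply_le_dist _
    | succ n ih =>
      intro X Y t ht
      rw [Function.iterate_succ_apply', Function.iterate_succ_apply']
      set A := Φ^[n] X with hA
      set B := Φ^[n] Y with hB
      rw [hEmem _ t ht, hEmem _ t ht, hΦapp, hΦapp, hPapp, hPapp,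
        add_sub_add_left_eq_sub, ← intervalIntegral.integral_sub (hii A ht) (hii B ht)]
      have hn1 : (0:ℝ) < (n.factorial : ℝ) := by exact_mod_cast n.factorial_pos
      calc ‖∫ s in (0:ℝ)..t, (S (max (t - s) 0) (f s • E A s + d s)
              - S (max (t - s) 0) (f s • E B s + d s))‖
          ≤ |∫ s in (0:ℝ)..t, M ^ (n+1) * dist X Y / n.factorial * s ^ n| := by
            apply intervalIntegral.norm_integral_le_abs_of_norm_le
            · filter_upwards [MeasureTheory.ae_restrict_mem measurableSet_uIoc] with s hs
              rw [Set.uIoc_of_le ht.1] at hs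
              have hstep : S (max (t - s) 0) (f s • E A s + d s)
                  - S (max (t - s) 0) (f s • E B s + d s)
                  = S (max (t - s) 0) (f s • (E A s - E B s)) := by
                rw [← map_sub, add_sub_add_right_eq_sub, ← smul_sub]
              rw [hstep]
              refine le_trans (hScontr _ (le_max_right _ _) _) ?_
              rw [norm_smul, Real.norm_eq_abs]
              have hsmem : s ∈ Set.Icc (0:ℝ) T := ⟨hs.1.le, hs.2.trans ht.2⟩
              refine le_trans
                (mul_le_mul (hMf s hsmem) (ih X Y s hsmem) (norm_nonneg _) hM0) ?_
              rw [pow_succ]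
              ring_nf
              exact le_rfl
            · exact (Continuous.intervalIntegrable (by fun_prop) 0 t)
        _ = M ^ (n+1) * t ^ (n+1) / (n+1).factorial * dist X Y := by
            rw [intervalIntegral.integral_const_mul, integral_pow]
            rw [zero_pow (Nat.succ_ne_zero n), sub_zero]
            rw [abs_of_nonneg]
            · rw [Nat.factorial_succ]
              have h2 : ((n:ℝ) + 1) ≠ 0 := by positivity
              push_cast
              field_simp
            · exact mul_nonneg
                (div_nonneg (mul_nonneg (pow_nonneg hM0 _) dist_nonneg) (Nat.cast_nonneg _))
                (div_nonneg (pow_nonneg ht.1 _) (by positivity))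
  -- pick n making the iterate a contraction
  obtain ⟨n, hn⟩ : ∃ n : ℕ, M ^ n * T ^ n / n.factorial < 1 := by
    have h := FloorSemiring.tendsto_pow_div_factorial_atTop (K := ℝ) (M * T)
    have h2 := (h.eventually_lt_const one_pos).exists
    obtain ⟨n, hn⟩ := h2
    exact ⟨n, by rwa [mul_pow] at hn⟩
  set K : NNReal := ⟨M ^ n * T ^ n / n.factorial, by positivity⟩ with hK
  have hKcoe : (K : ℝ) = M ^ n * T ^ n / n.factorial := rfl
  have hΦlip : LipschitzWith K (Φ^[n]) := by
    apply LipschitzWith.of_dist_le_mul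
    intro X Y
    rw [hKcoe, ContinuousMap.dist_le (by positivity)]
    intro u
    rw [dist_eq_norm]
    have h1 := key n X Y u.1 u.2
    rw [hEmem _ _ u.2, hEmem _ _ u.2] at h1
    refine le_trans h1 ?_
    have hpow : u.1 ^ n ≤ T ^ n := pow_le_pow_left₀ u.2.1 u.2.2 n
    have hd0 : (0:ℝ) ≤ dist X Y := dist_nonneg
    have hfac : (0:ℝ) < (n.factorial : ℝ) := by exact_mod_cast n.factorial_pos
    gcongr
  have hC : ContractingWith K (Φ^[n]) := by
    constructor
    · rw [← NNReal.coe_lt_coe, NNReal.coe_one, hKcoe]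
      exact hn
    · exact hΦlip
  set z := hC.fixedPoint (Φ^[n]) with hzdef
  have hΦz : Φ z = z := hC.isFixedPt_fixedPoint_iterate
  refine ⟨Set.IccExtend hT' z, ⟨?_, ?_⟩, ?_⟩
  · exact (z.continuous.comp continuous_projIcc).continuousOn
  · intro t ht
    rw [Set.IccExtend_of_mem hT' z ht]
    conv_lhs => rw [← hΦz]
    rw [hΦapp]
    have hcoe : ((⟨t, ht⟩ : ↥(Set.Icc (0:ℝ) T)) : ℝ) = t := rfl
    rw [hcoe, hPapp]
    congr 1
    apply intervalIntegral.integral_congr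
    intro s hs
    rw [Set.uIcc_of_le ht.1] at hs
    show S (max (t - s) 0) (f s • E z s + d s) = S (t - s) (f s • Set.IccExtend hT' z s + d s)
    rw [max_eq_left (sub_nonneg.2 hs.2)]
  · rintro Y ⟨hYc, hYeq⟩
    set Yc : C(↥(Set.Icc (0:ℝ) T), H) := ⟨Set.restrict _ Y, hYc.restrict⟩ with hYcdef
    have hYfix : Φ Yc = Yc := by
      ext u
      rw [hΦapp, hPapp]
      have hrhs : Yc u = Y u.1 := rfl
      rw [hrhs, hYeq u.1 u.2]
      congr 1
      apply intervalIntegral.integral_congr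
      intro s hs
      rw [Set.uIcc_of_le u.2.1] at hs
      have hsT : s ∈ Set.Icc (0:ℝ) T := ⟨hs.1, hs.2.trans u.2.2⟩
      show S (max ((u:ℝ) - s) 0) (f s • E Yc s + d s) = S ((u:ℝ) - s) (f s • Y s + d s)
      rw [max_eq_left (sub_nonneg.2 hs.2), hEmem Yc s hsT]
      rfl
    have hYfix' : Function.IsFixedPt Φ Yc := hYfix
    have hYiter : Function.IsFixedPt Φ^[n] Yc := hYfix'.iterate n
    have hYz : Yc = z := hC.fixedPoint_unique hYiter
    intro t ht
    rw [Set.IccExtend_of_mem hT' z ht, ← hYz]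
    rfl
end
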